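/- arXiv:2601.17988 — 5 statements merged into one kernel-verified Lean document; each statement's English description precedes it below -/
import Mathlib

section
/- Let G be a set and X a G-process. Then the following are equivalent: (1) X is separable in probability; (2) there exists a G-process X′ defined on a standard probability space having the same distribution as X. Moreover, in that case the standard probability space can be chosen so that its σ-algebra equals, modulo null sets, the σ-algebra generated by countably many of the random variables X′_s, s∈S, for some countable S ⊆ G. -/
open MeasureTheory ProbabilityTheory Filter Topology symmDiff

noncomputable section

namespace Paper

variable {G : Type*} {Ω : Type*}

/-- The distribution of a `G`-process: the pushforward of `P` on `ℝ^G`. -/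
def procLaw [MeasurableSpace Ω] (P : Measure Ω) (X : G → Ω → ℝ) : Measure (G → ℝ) :=
  Measure.map (fun ω g => X g ω) P

/-- The left translation `R_g` of `ℝ^G`, `R_g((x_h)_h) = (x_{g⁻¹ h})_h`. -/
def shiftMap [Group G] (g : G) : (G → ℝ) → G → ℝ := fun x h => x (g⁻¹ * h)

/-- The (possibly non-invertible) right-style translation `Q_g((x_h)_h) = (x_{g h})_h`. -/
def transMap [Mul G] (g : G) : (G → ℝ) → G → ℝ := fun x h => x (g * h)

/-- (Left) stationarity of a `G`-process. -/
def Stationary [Mul G] [MeasurableSpace Ω] (P : Measure Ω) (X : G → Ω → ℝ) : Prop :=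
  ∀ g : G, procLaw P (fun h => X (g * h)) = procLaw P X

/-- Ergodicity of a stationary `G`-process: every a.s. translation-invariant measurable set
in `ℝ^G` has law-measure `0` or `1`. -/
def ErgodicProcess [Group G] [MeasurableSpace Ω] (P : Measure Ω) (X : G → Ω → ℝ) : Prop :=
  ∀ E : Set (G → ℝ), MeasurableSet E →
    (∀ g : G, procLaw P X ((shiftMap g ⁻¹' E) ∆ E) = 0) →
    procLaw P X E = 0 ∨ procLaw P X E = 1

/-- Weak mixing of a stationary `G`-process: the diagonal product system
`{R_g × R_g}` on `(ℝ^G × ℝ^G, ℙ_X ⊗ ℙ_X)` is ergodic. -/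
def WeaklyMixingProcess [Group G] [MeasurableSpace Ω] (P : Measure Ω) (X : G → Ω → ℝ) : Prop :=
  ∀ E : Set ((G → ℝ) × (G → ℝ)), MeasurableSet E →
    (∀ g : G, ((procLaw P X).prod (procLaw P X))
        (((fun p => (shiftMap g p.1, shiftMap g p.2)) ⁻¹' E) ∆ E) = 0) →
    ((procLaw P X).prod (procLaw P X)) E = 0 ∨ ((procLaw P X).prod (procLaw P X)) E = 1

/-- Separability in probability of a `G`-process. -/
def SeparableInProbability [MeasurableSpace Ω] (P : Measure Ω) (X : G → Ω → ℝ) : Prop :=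
  ∃ S : Set G, S.Countable ∧
    ∀ g : G, ∃ s : ℕ → G, (∀ n, s n ∈ S) ∧
      TendstoInMeasure P (fun n => X (s n)) atTop (X g)

/-- The finite dimensional distribution of the process along `gs : Fin n → G`. -/
def fdd [MeasurableSpace Ω] (P : Measure Ω) (X : G → Ω → ℝ) {n : ℕ} (gs : Fin n → G) :
    Measure (Fin n → ℝ) :=
  Measure.map (fun ω i => X (gs i) ω) P

/-- A measure on `ℝⁿ` is infinitely divisible if for every `m` it is the `m`-fold
convolution power of some probability measure. -/
def InfinitelyDivisible {n : ℕ} (μ : Measure (Fin n → ℝ)) : Prop :=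
  ∀ m : ℕ, 0 < m → ∃ ν : Measure (Fin n → ℝ), IsProbabilityMeasure ν ∧
    μ = Measure.map (fun x : Fin m → Fin n → ℝ => ∑ i, x i) (Measure.pi fun _ => ν)

/-- A `G`-process is infinitely divisible if all its finite dimensional
distributions are infinitely divisible. -/
def InfinitelyDivisibleProcess [MeasurableSpace Ω] (P : Measure Ω) (X : G → Ω → ℝ) : Prop :=
  ∀ (n : ℕ) (gs : Fin n → G), InfinitelyDivisible (fdd P X gs)

/-- Stochastic continuity of a process indexed by a topological group (or semigroup). -/
def StochasticallyContinuous [TopologicalSpace G] [MeasurableSpace Ω]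
    (P : Measure Ω) (X : G → Ω → ℝ) : Prop :=
  ∀ g₀ : G, TendstoInMeasure P X (𝓝 g₀) (X g₀)

/-- All finite dimensional characteristic functions of the process are nowhere vanishing. -/
def CharFunNonVanishing [MeasurableSpace Ω] (P : Measure Ω) (X : G → Ω → ℝ) : Prop :=
  ∀ (n : ℕ) (gs : Fin n → G) (t : Fin n → ℝ),
    (∫ x, Complex.exp (Complex.I * ((∑ i, t i * x i : ℝ) : ℂ)) ∂(fdd P X gs)) ≠ 0

/-- A measure on `ℝⁿ` is a (possibly degenerate) Gaussian measure iff each of its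
one-dimensional linear-functional pushforwards is a real Gaussian. -/
def IsGaussianMeasure {n : ℕ} (μ : Measure (Fin n → ℝ)) : Prop :=
  ∀ t : Fin n → ℝ, ∃ (m : ℝ) (v : NNReal),
    Measure.map (fun x => ∑ i, t i * x i) μ = gaussianReal m v

/-- A Gaussian `G`-process: all finite dimensional distributions are
(possibly degenerate) Gaussian. -/
def GaussianProcess [MeasurableSpace Ω] (P : Measure Ω) (X : G → Ω → ℝ) : Prop :=
  ∀ (n : ℕ) (gs : Fin n → G), IsGaussianMeasure (fdd P X gs)

/-- Ergodicity of a probability preserving `Θ`-system (maps need not be invertible). -/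
def ErgodicSystem {Θ 𝕏 : Type*} [MeasurableSpace 𝕏] (ξ : Measure 𝕏) (T : Θ → 𝕏 → 𝕏) : Prop :=
  ∀ A : Set 𝕏, MeasurableSet A → (∀ θ : Θ, ξ ((T θ ⁻¹' A) ∆ A) = 0) →
    ξ A = 0 ∨ ξ A = 1

/-- A probability preserving automorphism: a bi-measurable measure-preserving bijection
between full-measure measurable subsets. -/
def IsPPAutomorphism [MeasurableSpace Ω] (P : Measure Ω) (T : Ω → Ω) : Prop :=
  Measurable T ∧ (∀ A : Set Ω, MeasurableSet A → P (T ⁻¹' A) = P A) ∧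
  ∃ (A B : Set Ω) (σ : Ω → Ω), MeasurableSet A ∧ MeasurableSet B ∧
    P A = 1 ∧ P B = 1 ∧ Measurable σ ∧ Set.MapsTo T A B ∧ Set.MapsTo σ B A ∧
    Set.InvOn σ T A B

section Aux
open scoped ENNReal NNReal

set_option maxHeartbeats 1000000
set_option synthInstance.maxHeartbeats 1000000

/-- Two maps into a product that are coordinatewise a.e. equal have the same pushforward. -/
lemma map_pi_congr [MeasurableSpace Ω] (P : Measure Ω) [IsProbabilityMeasure P]
    {Y Z : Ω → G → ℝ} (hY : Measurable Y) (hZ : Measurable Z)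
    (h : ∀ g, (fun ω => Y ω g) =ᵐ[P] fun ω => Z ω g) :
    Measure.map Y P = Measure.map Z P := by
  haveI : IsProbabilityMeasure (Measure.map Y P) := Measure.isProbabilityMeasure_map hY.aemeasurable
  refine ext_of_generate_finite _ generateFrom_measurableCylinders.symm
    isPiSystem_measurableCylinders (fun t ht => ?_) ?_
  · obtain ⟨I, S, hS, rfl⟩ := (mem_measurableCylinders t).1 ht
    rw [Measure.map_apply hY (hS.cylinder I), Measure.map_apply hZ (hS.cylinder I)]
    refine measure_congr ?_
    have hae : ∀ᵐ ω ∂P, ∀ i ∈ (I : Set G), Y ω i = Z ω i :=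
      (ae_ball_iff I.countable_toSet).2 fun i _ => h i
    rw [Filter.eventuallyEq_set]
    filter_upwards [hae] with ω hω
    simp only [Set.mem_preimage, mem_cylinder]
    have : I.restrict (Y ω) = I.restrict (Z ω) := funext fun i => hω i i.2
    rw [this]
  · have : IsProbabilityMeasure (Measure.map Z P) := Measure.isProbabilityMeasure_map hZ.aemeasurable
    simp [measure_univ]

lemma sep_transfer {Ω₂ : Type*} [MeasurableSpace Ω] [MeasurableSpace Ω₂]
    (P : Measure Ω) (Q : Measure Ω₂) (X : G → Ω → ℝ) (Y : G → Ω₂ → ℝ)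
    (hX : ∀ g, Measurable (X g)) (hY : ∀ g, Measurable (Y g))
    (hlaw : procLaw P X = procLaw Q Y) :
    SeparableInProbability Q Y → SeparableInProbability P X := by
  have key : ∀ (a b : G) (ε : ℝ), P {ω | ε ≤ dist (X a ω) (X b ω)}
      = Q {ω | ε ≤ dist (Y a ω) (Y b ω)} := by
    intro a b ε
    have hA : MeasurableSet {x : G → ℝ | ε ≤ dist (x a) (x b)} :=
      measurableSet_le measurable_const ((measurable_pi_apply a).dist (measurable_pi_apply b))
    have h1 : P {ω | ε ≤ dist (X a ω) (X b ω)} = procLaw P X {x | ε ≤ dist (x a) (x b)} := by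
      rw [procLaw, Measure.map_apply (measurable_pi_lambda _ hX) hA]; rfl
    have h2 : Q {ω | ε ≤ dist (Y a ω) (Y b ω)} = procLaw Q Y {x | ε ≤ dist (x a) (x b)} := by
      rw [procLaw, Measure.map_apply (measurable_pi_lambda _ hY) hA]; rfl
    rw [h1, h2, hlaw]
  rintro ⟨S, hSc, hS⟩
  refine ⟨S, hSc, fun g => ?_⟩
  obtain ⟨s, hsS, hs⟩ := hS g
  refine ⟨s, hsS, tendstoInMeasure_iff_dist.2 fun ε hε => ?_⟩
  have := tendstoInMeasure_iff_dist.1 hs ε hε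
  simpa only [key] using this

lemma sep_standard {Ω' : Type*} [MeasurableSpace Ω'] [StandardBorelSpace Ω'] (P' : Measure Ω')
    [IsProbabilityMeasure P'] (X' : G → Ω' → ℝ) (hm : ∀ g, Measurable (X' g)) :
    SeparableInProbability P' X' := by
  classical
  haveI : Fact ((1:ℝ≥0∞) ≤ 1) := ⟨le_rfl⟩
  haveI : Fact ((1:ℝ≥0∞) ≠ ⊤) := ⟨ENNReal.one_ne_top⟩
  set tc : ℕ → ℝ → ℝ := fun m x => max (-(m:ℝ)) (min (m:ℝ) x) with htrunc
  have htm : ∀ m g, Measurable fun ω => tc m (X' g ω) := fun m g =>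
    measurable_const.max (measurable_const.min (hm g))
  have hmem : ∀ m g, MemLp (fun ω => tc m (X' g ω)) 1 P' := by
    intro m g
    refine (memLp_top_of_bound (htm m g).aestronglyMeasurable (m:ℝ) ?_).mono_exponent le_top
    refine Eventually.of_forall fun ω => ?_
    rw [Real.norm_eq_abs, abs_le]
    exact ⟨le_max_left _ _, max_le (neg_nonpos.2 (Nat.cast_nonneg m) |>.trans (Nat.cast_nonneg m))
      (min_le_left _ _)⟩
  set F : G → ∀ _ : ℕ, Lp ℝ 1 P' := fun g => fun m => (hmem m g).toLp _ with hF
  haveI : MeasureTheory.IsSeparable P' := inferInstance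
  haveI : SecondCountableTopology (Lp ℝ 1 P') := inferInstance
  haveI : SecondCountableTopology (∀ _ : ℕ, Lp ℝ 1 P') := inferInstance
  haveI : SecondCountableTopology ↥(Set.range F) := inferInstance
  haveI : TopologicalSpace.SeparableSpace ↥(Set.range F) :=
    TopologicalSpace.SecondCountableTopology.to_separableSpace
  obtain ⟨D, hDc, hDd⟩ := TopologicalSpace.exists_countable_dense ↥(Set.range F)
  have hpick : ∀ d : ↥(Set.range F), ∃ g : G, F g = (d : ∀ _ : ℕ, Lp ℝ 1 P') := fun d => d.2
  choose pick hpick_spec using hpick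
  refine ⟨pick '' D, hDc.image _, fun g => ?_⟩
  have hcl : (⟨F g, Set.mem_range_self g⟩ : ↥(Set.range F)) ∈ closure D := hDd _
  obtain ⟨u, huD, hu⟩ := mem_closure_iff_seq_limit.1 hcl
  refine ⟨fun n => pick (u n), fun n => Set.mem_image_of_mem _ (huD n), ?_⟩
  -- coordinatewise L¹ convergence
  have hucoe : Tendsto (fun n => (u n : ∀ _ : ℕ, Lp ℝ 1 P')) atTop (𝓝 (F g)) :=
    ((continuous_subtype_val.tendsto _).comp hu)
  have hZ : ∀ m : ℕ, TendstoInMeasure P' (fun n ω => tc m (X' (pick (u n)) ω)) atTop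
      (fun ω => tc m (X' g ω)) := by
    intro m
    have h1 : Tendsto (fun n => (u n : ∀ _ : ℕ, Lp ℝ 1 P') m) atTop (𝓝 (F g m)) :=
      ((continuous_apply m).tendsto _).comp hucoe
    have h2 : Tendsto (fun n => eLpNorm ((((u n : ∀ _ : ℕ, Lp ℝ 1 P') m : Lp ℝ 1 P') : Ω' → ℝ)
        - fun ω => tc m (X' g ω)) 1 P') atTop (𝓝 0) :=
      (Lp.tendsto_Lp_iff_tendsto_eLpNorm _ _ (hmem m g)).1 h1
    have h3 : Tendsto (fun n => eLpNorm ((fun ω => tc m (X' (pick (u n)) ω))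
        - fun ω => tc m (X' g ω)) 1 P') atTop (𝓝 0) := by
      refine h2.congr fun n => ?_
      refine eLpNorm_congr_ae ?_
      have : (((u n : ∀ _ : ℕ, Lp ℝ 1 P') m : Lp ℝ 1 P') : Ω' → ℝ)
          =ᵐ[P'] fun ω => tc m (X' (pick (u n)) ω) := by
        rw [← hpick_spec (u n)]
        exact MemLp.coeFn_toLp _
      exact this.sub EventuallyEq.rfl
    exact tendstoInMeasure_of_tendsto_eLpNorm one_ne_zero
      (fun n => (htm m (pick (u n))).aestronglyMeasurable) (htm m g).aestronglyMeasurable h3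
  -- conclude
  refine tendstoInMeasure_iff_dist.2 fun ε hε => ?_
  rw [ENNReal.tendsto_nhds_zero]
  intro η hη
  obtain ⟨m, hm2⟩ : ∃ m : ℕ, P' {ω | (m:ℝ) - 1 ≤ |X' g ω|} ≤ η / 2 := by
    have htend : Tendsto (fun m : ℕ => P' {ω | (m:ℝ) - 1 ≤ |X' g ω|}) atTop
        (𝓝 (P' (⋂ m : ℕ, {ω | (m:ℝ) - 1 ≤ |X' g ω|}))) := by
      refine tendsto_measure_iInter_atTop
        (fun m => (measurableSet_le measurable_const (hm g).abs).nullMeasurableSet)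
        (fun i j hij ω hω => ?_) ⟨0, measure_ne_top _ _⟩
      simp only [Set.mem_setOf_eq] at hω ⊢
      have : (i:ℝ) ≤ (j:ℝ) := Nat.cast_le.2 hij
      linarith
    have hempty : (⋂ m : ℕ, {ω | (m:ℝ) - 1 ≤ |X' g ω|}) = ∅ := by
      ext ω
      simp only [Set.mem_iInter, Set.mem_setOf_eq, Set.mem_empty_iff_false, iff_false, not_forall,
        not_le]
      obtain ⟨m, hm⟩ := exists_nat_gt (|X' g ω| + 1)
      exact ⟨m, by linarith⟩
    rw [hempty, measure_empty] at htend
    exact (ENNReal.tendsto_nhds_zero.mp htend (η/2) (ENNReal.half_pos hη.ne')).exists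
  set ε' := min ε 1 with hε'def
  have hε' : 0 < ε' := lt_min hε one_pos
  have hev := ENNReal.tendsto_nhds_zero.mp (tendstoInMeasure_iff_dist.1 (hZ m) ε' hε') (η/2) (ENNReal.half_pos hη.ne')
  filter_upwards [hev] with n hn
  have hsub : {ω | ε ≤ dist (X' (pick (u n)) ω) (X' g ω)} ⊆
      {ω | (m:ℝ) - 1 ≤ |X' g ω|} ∪
      {ω | ε' ≤ dist (tc m (X' (pick (u n)) ω)) (tc m (X' g ω))} := by
    intro ω hω
    by_cases hc : (m:ℝ) - 1 ≤ |X' g ω|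
    · exact Or.inl hc
    · right
      simp only [Set.mem_setOf_eq, Real.dist_eq] at hω ⊢
      push_neg at hc
      set a := X' (pick (u n)) ω
      set b := X' g ω
      have hε'1 : ε' ≤ 1 := min_le_right _ _
      have hε'ε : ε' ≤ ε := min_le_left _ _
      have hb1 : b < (m:ℝ) - 1 := (abs_lt.1 hc).2
      have hb2 : -((m:ℝ) - 1) < b := (abs_lt.1 hc).1
      have htb : tc m b = b := by
        simp only [htrunc]
        rw [min_eq_right (by linarith), max_eq_right (by linarith)]
      rcases le_or_gt b a with hba | hab
      · have h1 : b + ε' ≤ a := by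
          have : ε ≤ a - b := by rw [abs_of_nonneg (by linarith)] at hω; linarith
          linarith
        have h2 : tc m (b + ε') ≤ tc m a :=
          max_le_max le_rfl (min_le_min le_rfl h1)
        have h3 : tc m (b + ε') = b + ε' := by
          simp only [htrunc]
          rw [min_eq_right (by linarith), max_eq_right (by linarith)]
        rw [htb]
        rw [abs_of_nonneg (by linarith [h3 ▸ h2])]
        linarith [h3 ▸ h2]
      · have h1 : a ≤ b - ε' := by
          have : ε ≤ b - a := by rw [abs_of_nonpos (by linarith)] at hω; linarith
          linarith
        have h2 : tc m a ≤ tc m (b - ε') :=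
          max_le_max le_rfl (min_le_min le_rfl h1)
        have h3 : tc m (b - ε') = b - ε' := by
          simp only [htrunc]
          rw [min_eq_right (by linarith), max_eq_right (by linarith)]
        rw [htb]
        rw [abs_of_nonpos (by linarith [h3 ▸ h2])]
        linarith [h3 ▸ h2]
  calc P' {ω | ε ≤ dist (X' (pick (u n)) ω) (X' g ω)}
      ≤ P' ({ω | (m:ℝ) - 1 ≤ |X' g ω|} ∪
        {ω | ε' ≤ dist (tc m (X' (pick (u n)) ω)) (tc m (X' g ω))}) := measure_mono hsub
    _ ≤ P' {ω | (m:ℝ) - 1 ≤ |X' g ω|} +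
        P' {ω | ε' ≤ dist (tc m (X' (pick (u n)) ω)) (tc m (X' g ω))} := measure_union_le _ _
    _ ≤ η/2 + η/2 := add_le_add hm2 hn
    _ = η := ENNReal.add_halves η

private def apprAlg (P' : Measure (ℕ → ℝ)) (m : MeasurableSpace (ℕ → ℝ)) :
    MeasurableSpace (ℕ → ℝ) where
  MeasurableSet' A := ∃ B : Set (ℕ → ℝ), MeasurableSet[m] B ∧ A =ᵐ[P'] B
  measurableSet_empty := ⟨∅, @MeasurableSet.empty _ m, EventuallyEq.rfl⟩
  measurableSet_compl := by
    rintro A ⟨B, hB, hAB⟩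
    refine ⟨Bᶜ, hB.compl, ?_⟩
    rw [Filter.eventuallyEq_set] at hAB ⊢
    filter_upwards [hAB] with x hx
    simp [hx]
  measurableSet_iUnion := by
    intro f hf
    choose B hB hAB using hf
    exact ⟨⋃ i, B i, MeasurableSet.iUnion hB, EventuallyEq.countable_iUnion hAB⟩

/-- The main construction. -/
lemma construction [MeasurableSpace Ω] (P : Measure Ω) [IsProbabilityMeasure P]
    (X : G → Ω → ℝ) (hmeas : ∀ g, Measurable (X g)) (hsep : SeparableInProbability P X) :
    ∃ (Ω' : Type) (_ : MeasurableSpace Ω') (P' : Measure Ω') (X' : G → Ω' → ℝ),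
      StandardBorelSpace Ω' ∧ IsProbabilityMeasure P' ∧ (∀ g, Measurable (X' g)) ∧
      procLaw P' X' = procLaw P X ∧
      ∃ S : Set G, S.Countable ∧
        ∀ A : Set Ω', MeasurableSet A →
          ∃ B : Set Ω',
            MeasurableSet[⨆ s ∈ S, MeasurableSpace.comap (X' s) inferInstance] B ∧
            P' (A ∆ B) = 0 := by
  classical
  by_cases hG : Nonempty G
  case neg =>
    -- G is empty
    haveI hGe : IsEmpty G := not_nonempty_iff.1 hG
    haveI : Subsingleton (G → ℝ) := ⟨fun a b => funext fun g => isEmptyElim g⟩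
    refine ⟨Unit, inferInstance, Measure.dirac (), fun g => isEmptyElim g, inferInstance,
      inferInstance, fun g => isEmptyElim g, ?_, ∅, Set.countable_empty, ?_⟩
    · -- procLaw equality on a subsingleton target
      refine Measure.ext fun s hs => ?_
      rcases s.eq_empty_or_nonempty with rfl | ⟨x, hx⟩
      · simp
      · have hs_univ : s = Set.univ :=
          Set.eq_univ_of_forall fun y => (Subsingleton.elim x y) ▸ hx
        subst hs_univ
        rw [procLaw, procLaw,
          Measure.map_apply (measurable_pi_lambda _ fun g => isEmptyElim g) MeasurableSet.univ,
          Measure.map_apply (measurable_pi_lambda _ fun g => isEmptyElim g) MeasurableSet.univ]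
        simp
    · intro A hA
      refine ⟨A, ?_, by simp⟩
      rcases A.eq_empty_or_nonempty with rfl | ⟨x, hx⟩
      · exact MeasurableSpace.measurableSet_empty _
      · have : A = Set.univ := Set.eq_univ_of_forall fun y => (Subsingleton.elim x y) ▸ hx
        subst this
        rw [← Set.compl_empty]
        exact MeasurableSpace.measurableSet_compl _ _ (MeasurableSpace.measurableSet_empty _)
  case pos =>
    obtain ⟨S₀, hS₀c, hS₀⟩ := hsep
    obtain ⟨g₀⟩ := hG
    obtain ⟨s0, hs00, -⟩ := hS₀ g₀
    obtain ⟨e, he⟩ := hS₀c.exists_eq_range ⟨s0 0, hs00 0⟩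
    set φ : Ω → (ℕ → ℝ) := fun ω n => X (e n) ω with hφdef
    have hφapp : ∀ ω n, φ ω n = X (e n) ω := fun _ _ => rfl
    have hφ : Measurable φ := measurable_pi_lambda _ fun n => hmeas (e n)
    set P' : Measure (ℕ → ℝ) := Measure.map φ P with hP'
    haveI : IsProbabilityMeasure P' := Measure.isProbabilityMeasure_map hφ.aemeasurable
    -- limits along subsequences for each g
    have hlim : ∀ g : G, ∃ Y : (ℕ → ℝ) → ℝ, Measurable Y ∧ (fun ω => Y (φ ω)) =ᵐ[P] X g := by
      intro g
      obtain ⟨s, hsS, hs⟩ := hS₀ g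
      obtain ⟨ns, -, hns⟩ := hs.exists_seq_tendsto_ae
      have hsrange : ∀ k, s (ns k) ∈ Set.range e := fun k => he ▸ hsS (ns k)
      set mk : ℕ → ℕ := fun k => (hsrange k).choose with hmkdef
      have hmke : ∀ k, e (mk k) = s (ns k) := fun k => (hsrange k).choose_spec
      have heqfun : ∀ ω, (fun k => φ ω (mk k)) = fun k => X (s (ns k)) ω := by
        intro ω; funext k; rw [hφapp]; exact congrFun (congrArg X (hmke k)) ω
      have hae' : ∀ᵐ x ∂P', ∃ c, Tendsto (fun k => x (mk k)) atTop (𝓝 c) := by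
        rw [hP', ae_map_iff hφ.aemeasurable
          (measurableSet_exists_tendsto fun k => measurable_pi_apply (mk k))]
        filter_upwards [hns] with ω hω
        refine ⟨X g ω, ?_⟩
        rw [heqfun ω]
        exact hω
      obtain ⟨Y, hYmeas, hYlim⟩ := measurable_limit_of_tendsto_metrizable_ae
        (fun k => (measurable_pi_apply (mk k)).aemeasurable) hae'
      refine ⟨Y, hYmeas, ?_⟩
      have h1 : ∀ᵐ ω ∂P, Tendsto (fun k => φ ω (mk k)) atTop (𝓝 (Y (φ ω))) := by
        rw [hP'] at hYlim
        exact ae_of_ae_map hφ.aemeasurable hYlim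
      filter_upwards [h1, hns] with ω h1ω h2ω
      rw [heqfun ω] at h1ω
      exact tendsto_nhds_unique h1ω h2ω
    choose Y hYmeas hYeq using hlim
    set X' : G → (ℕ → ℝ) → ℝ := fun g x => if h : g ∈ Set.range e then x h.choose else Y g x
      with hX'def
    have hX'meas : ∀ g, Measurable (X' g) := by
      intro g
      by_cases h : g ∈ Set.range e
      · simp only [hX'def, dif_pos h]; exact measurable_pi_apply _
      · simp only [hX'def, dif_neg h]; exact hYmeas g
    have hX'eq : ∀ g, (fun ω => X' g (φ ω)) =ᵐ[P] X g := by
      intro g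
      by_cases h : g ∈ Set.range e
      · refine Eventually.of_forall fun ω => ?_
        simp only [hX'def, dif_pos h]
        rw [hφapp, h.choose_spec]
      · simp only [hX'def, dif_neg h]
        exact hYeq g
    refine ⟨ℕ → ℝ, inferInstance, P', X', inferInstance, inferInstance, hX'meas, ?_,
      Set.range e, Set.countable_range e, ?_⟩
    · -- procLaw equality
      rw [procLaw, procLaw, hP', Measure.map_map (measurable_pi_lambda _ hX'meas) hφ]
      exact map_pi_congr P ((measurable_pi_lambda _ hX'meas).comp hφ)
        (measurable_pi_lambda _ hmeas) (fun g => hX'eq g)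
    · -- σ-algebra generated mod null
      have hgen : ∀ (n : ℕ) (C : Set ℝ), MeasurableSet C →
          ∃ B : Set (ℕ → ℝ),
            MeasurableSet[⨆ s ∈ Set.range e, MeasurableSpace.comap (X' s) inferInstance] B ∧
            ((fun x : ℕ → ℝ => x n) ⁻¹' C) =ᵐ[P'] B := by
        intro n C hC
        have hmem : e n ∈ Set.range e := ⟨n, rfl⟩
        refine ⟨X' (e n) ⁻¹' C, ?_, ?_⟩
        · have hle : MeasurableSpace.comap (X' (e n)) inferInstance
              ≤ ⨆ s ∈ Set.range e, MeasurableSpace.comap (X' s) inferInstance :=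
            le_iSup₂ (f := fun s (_ : s ∈ Set.range e) =>
              MeasurableSpace.comap (X' s) inferInstance) (e n) hmem
          have h1 : MeasurableSet[MeasurableSpace.comap (X' (e n)) inferInstance]
              (X' (e n) ⁻¹' C) := ⟨C, hC, rfl⟩
          exact hle _ h1
        · have hXn : X' (e n) = fun x : ℕ → ℝ => x hmem.choose := by
            funext x; simp only [hX'def, dif_pos hmem]
          have hae : ∀ᵐ x ∂P', x n = x hmem.choose := by
            rw [hP', ae_map_iff hφ.aemeasurable
              (measurableSet_eq_fun (measurable_pi_apply n) (measurable_pi_apply hmem.choose))]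
            refine Eventually.of_forall fun ω => ?_
            show φ ω n = φ ω hmem.choose
            rw [hφapp, hφapp, hmem.choose_spec]
          rw [Filter.eventuallyEq_set]
          filter_upwards [hae] with x hx
          rw [hXn]
          simp only [Set.mem_preimage, hx]
      intro A hA
      have hle : (MeasurableSpace.pi : MeasurableSpace (ℕ → ℝ)) ≤
          apprAlg P' (⨆ s ∈ Set.range e, MeasurableSpace.comap (X' s) inferInstance) := by
        rw [show (MeasurableSpace.pi : MeasurableSpace (ℕ → ℝ))
          = ⨆ n : ℕ, MeasurableSpace.comap (fun x : ℕ → ℝ => x n) inferInstance from rfl]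
        refine iSup_le fun n => ?_
        rintro A ⟨C, hC, rfl⟩
        exact hgen n C hC
      obtain ⟨B, hB, hAB⟩ := hle A hA
      exact ⟨B, hB, measure_symmDiff_eq_zero_iff.2 hAB⟩

end Aux

/-- a `G`-process is separable in probability iff it has a version
defined on a standard probability space; moreover the space may be chosen so that
its σ-algebra is generated modulo null sets by countably many coordinates. -/
theorem separableInProbability_iff_standard
    {G : Type*} {Ω : Type*} [MeasurableSpace Ω]
    (P : Measure Ω) [IsProbabilityMeasure P] (X : G → Ω → ℝ)
    (hmeas : ∀ g, Measurable (X g)) :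
    (SeparableInProbability P X ↔
      ∃ (Ω' : Type) (_ : MeasurableSpace Ω') (P' : Measure Ω') (X' : G → Ω' → ℝ),
        StandardBorelSpace Ω' ∧ IsProbabilityMeasure P' ∧ (∀ g, Measurable (X' g)) ∧
        procLaw P' X' = procLaw P X) ∧
    (SeparableInProbability P X →
      ∃ (Ω' : Type) (_ : MeasurableSpace Ω') (P' : Measure Ω') (X' : G → Ω' → ℝ),
        StandardBorelSpace Ω' ∧ IsProbabilityMeasure P' ∧ (∀ g, Measurable (X' g)) ∧
        procLaw P' X' = procLaw P X ∧
        ∃ S : Set G, S.Countable ∧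
          ∀ A : Set Ω', MeasurableSet A →
            ∃ B : Set Ω',
              MeasurableSet[⨆ s ∈ S, MeasurableSpace.comap (X' s) inferInstance] B ∧
              P' (A ∆ B) = 0) := by
  constructor
  · constructor
    · intro h
      obtain ⟨Ω', m', P', X', h1, h2, h3, h4, -⟩ := construction P X hmeas h
      exact ⟨Ω', m', P', X', h1, h2, h3, h4⟩
    · rintro ⟨Ω', m', P', X', h1, h2, h3, h4⟩
      letI := m'
      haveI := h1
      haveI := h2
      exact sep_transfer P P' X X' hmeas h3 h4.symm (sep_standard P' X' h3)
  · exact construction P X hmeas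

end Paper
end
end

section
/- Let G be a group, X a separable in probability stationary G-process, and let (Ĝ, τ, X̂) be any stochastically continuous extension of X. Then X is G-ergodic if and only if X̂ is Ĝ-ergodic. -/
open MeasureTheory ProbabilityTheory Filter Topology symmDiff

noncomputable section

namespace Paper

variable {G : Type*} {Ω : Type*}

section Aux

open Set

variable {H : Type*} [Group H]

lemma measurable_shiftMap (h : H) : Measurable (shiftMap (G := H) h) :=
  measurable_pi_lambda _ fun _ => measurable_pi_apply _

lemma shiftMap_comp (a b : H) :
    shiftMap (G := H) a ∘ shiftMap b = shiftMap (a * b) := by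
  funext x h
  simp [shiftMap, mul_inv_rev, mul_assoc]

lemma shiftMap_preimage_eval (h a : H) (B : Set ℝ) :
    shiftMap h ⁻¹' ((fun x : H → ℝ => x a) ⁻¹' B) =
      (fun x : H → ℝ => x (h⁻¹ * a)) ⁻¹' B := rfl

lemma union_symmDiff_union_subset {α : Type*} (s₁ s₂ t₁ t₂ : Set α) :
    (s₁ ∪ t₁) ∆ (s₂ ∪ t₂) ⊆ (s₁ ∆ s₂) ∪ (t₁ ∆ t₂) := by
  intro x hx
  simp only [Set.mem_symmDiff, Set.mem_union] at *
  tauto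

variable [TopologicalSpace H] [IsTopologicalGroup H]

lemma tendsto_symmDiff_closed
    (ν : Measure (H → ℝ)) [IsFiniteMeasure ν]
    (hinv : ∀ (h : H) (s : Set (H → ℝ)), MeasurableSet s → ν (shiftMap h ⁻¹' s) = ν s)
    (hcont : ∀ (h₀ : H) (u : ℕ → H), Tendsto u atTop (𝓝 h₀) →
      TendstoInMeasure ν (fun k x => x (u k)) atTop (fun x => x h₀))
    (h₀ : H) {B : Set ℝ} (hB : IsClosed B) {u : ℕ → H} (hu : Tendsto u atTop (𝓝 1)) :
    Tendsto (fun k => ν ((shiftMap (u k) ⁻¹' ((fun x : H → ℝ => x h₀) ⁻¹' B)) ∆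
      ((fun x : H → ℝ => x h₀) ⁻¹' B))) atTop (𝓝 0) := by
  have hBe : MeasurableSet B := hB.measurableSet
  set T : ℕ → Set ℝ := fun n => Metric.thickening (1 / (n + 1) : ℝ) B \ B with hT
  have hTmeas : ∀ n, MeasurableSet (T n) := fun n =>
    Metric.isOpen_thickening.measurableSet.diff hBe
  have hTanti : Antitone fun n => (fun x : H → ℝ => x h₀) ⁻¹' T n := by
    intro m n hmn
    apply Set.preimage_mono
    apply Set.diff_subset_diff_left
    apply Metric.thickening_mono _ B
    apply one_div_le_one_div_of_le
    · positivity
    · exact_mod_cast Nat.add_le_add_right hmn 1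
  have hTempty : ⋂ n, (fun x : H → ℝ => x h₀) ⁻¹' T n = (∅ : Set (H → ℝ)) := by
    rw [← Set.preimage_iInter]
    have h0 : ⋂ n, T n = (∅ : Set ℝ) := by
      ext z
      simp only [Set.mem_iInter, Set.mem_empty_iff_false, iff_false]
      intro hz
      have hcl : z ∈ closure B := by
        rw [Metric.mem_closure_iff]
        intro ε hε
        obtain ⟨n, hn⟩ := exists_nat_one_div_lt hε
        obtain ⟨y, hyB, hy⟩ := Metric.mem_thickening_iff.mp (hz n).1
        exact ⟨y, hyB, hy.trans hn⟩
      exact (hz 0).2 (hB.closure_eq ▸ hcl)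
    rw [h0, Set.preimage_empty]
  have hTtend : Tendsto (fun n => ν ((fun x : H → ℝ => x h₀) ⁻¹' T n)) atTop (𝓝 0) := by
    have h2 := tendsto_measure_iInter_atTop (μ := ν)
      (fun n => ((measurable_pi_apply h₀) (hTmeas n)).nullMeasurableSet) hTanti
      ⟨0, measure_ne_top _ _⟩
    rw [hTempty, measure_empty] at h2
    exact h2
  rw [ENNReal.tendsto_atTop_zero]
  intro ε hε
  have hε2 : (0 : ENNReal) < ε / 2 := ENNReal.div_pos hε.ne' ENNReal.ofNat_ne_top
  have hε4 : (0 : ENNReal) < ε / 2 / 2 := ENNReal.div_pos hε2.ne' ENNReal.ofNat_ne_top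
  obtain ⟨n, hn⟩ := (ENNReal.tendsto_atTop_zero.mp hTtend) (ε / 2 / 2) hε4
  have hnn := hn n le_rfl
  set δ : ℝ := 1 / (n + 1) with hδdef
  have hδ : (0 : ℝ) < δ := by positivity
  have humul : Tendsto (fun k => (u k)⁻¹ * h₀) atTop (𝓝 h₀) := by
    have := (hu.inv).mul (tendsto_const_nhds (x := h₀))
    simpa using this
  have hW := hcont h₀ (fun k => (u k)⁻¹ * h₀) humul
  obtain ⟨N, hN⟩ := (ENNReal.tendsto_atTop_zero.mp (hW (ENNReal.ofReal δ) (ENNReal.ofReal_pos.mpr hδ))) (ε / 2) hε2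
  refine ⟨N, fun k hk => ?_⟩
  have hsub : (shiftMap (u k) ⁻¹' ((fun x : H → ℝ => x h₀) ⁻¹' B)) ∆
      ((fun x : H → ℝ => x h₀) ⁻¹' B) ⊆
      {x : H → ℝ | δ ≤ dist (x ((u k)⁻¹ * h₀)) (x h₀)} ∪
        (((fun x : H → ℝ => x h₀) ⁻¹' T n) ∪
          ((fun x : H → ℝ => x ((u k)⁻¹ * h₀)) ⁻¹' T n)) := by
    rw [shiftMap_preimage_eval]
    intro x hx
    rcases Set.mem_symmDiff.mp hx with ⟨h1, h2⟩ | ⟨h1, h2⟩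
    · by_cases hd : δ ≤ dist (x ((u k)⁻¹ * h₀)) (x h₀)
      · exact Or.inl hd
      · refine Or.inr (Or.inl ⟨?_, h2⟩)
        refine Metric.mem_thickening_iff.mpr ⟨x ((u k)⁻¹ * h₀), h1, ?_⟩
        rw [dist_comm]
        exact not_le.mp hd
    · by_cases hd : δ ≤ dist (x ((u k)⁻¹ * h₀)) (x h₀)
      · exact Or.inl hd
      · refine Or.inr (Or.inr ⟨?_, h2⟩)
        exact Metric.mem_thickening_iff.mpr ⟨x h₀, h1, not_le.mp hd⟩
  have hkey : ν ((fun x : H → ℝ => x ((u k)⁻¹ * h₀)) ⁻¹' T n) =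
      ν ((fun x : H → ℝ => x h₀) ⁻¹' T n) := by
    rw [← shiftMap_preimage_eval (u k) h₀ (T n)]
    exact hinv (u k) _ ((measurable_pi_apply h₀) (hTmeas n))
  calc ν ((shiftMap (u k) ⁻¹' ((fun x : H → ℝ => x h₀) ⁻¹' B)) ∆
      ((fun x : H → ℝ => x h₀) ⁻¹' B))
      ≤ ν ({x : H → ℝ | δ ≤ dist (x ((u k)⁻¹ * h₀)) (x h₀)}) +
        (ν ((fun x : H → ℝ => x h₀) ⁻¹' T n) +
          ν ((fun x : H → ℝ => x ((u k)⁻¹ * h₀)) ⁻¹' T n)) :=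
        le_trans (measure_mono hsub) (le_trans (measure_union_le _ _)
          (add_le_add le_rfl (measure_union_le _ _)))
    _ ≤ ε / 2 + (ε / 2 / 2 + ε / 2 / 2) := by
        refine add_le_add (le_trans (measure_mono ?_) (hN k hk)) (add_le_add hnn ?_)
        · intro x hx
          simp only [Set.mem_setOf_eq, edist_dist] at hx ⊢
          exact ENNReal.ofReal_le_ofReal hx
        rw [hkey]; exact hnn
    _ = ε := by rw [ENNReal.add_halves, ENNReal.add_halves]

lemma tendsto_measure_symmDiff_shift
    (ν : Measure (H → ℝ)) [IsFiniteMeasure ν]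
    (hinv : ∀ (h : H) (s : Set (H → ℝ)), MeasurableSet s → ν (shiftMap h ⁻¹' s) = ν s)
    (hcont : ∀ (h₀ : H) (u : ℕ → H), Tendsto u atTop (𝓝 h₀) →
      TendstoInMeasure ν (fun k x => x (u k)) atTop (fun x => x h₀))
    {F : Set (H → ℝ)} (hF : MeasurableSet F)
    {u : ℕ → H} (hu : Tendsto u atTop (𝓝 1)) :
    Tendsto (fun k => ν ((shiftMap (u k) ⁻¹' F) ∆ F)) atTop (𝓝 0) := by
  have hQempty :
      Tendsto (fun k => ν ((shiftMap (u k) ⁻¹' (∅ : Set (H → ℝ))) ∆ ∅)) atTop (𝓝 0) := by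
    have h0 : ∀ k, ν ((shiftMap (u k) ⁻¹' (∅ : Set (H → ℝ))) ∆ ∅) = 0 := by
      intro k; simp [symmDiff_self, Set.bot_eq_empty]
    simp only [h0]
    exact tendsto_const_nhds
  have hQunion : ∀ s t : Set (H → ℝ),
      Tendsto (fun k => ν ((shiftMap (u k) ⁻¹' s) ∆ s)) atTop (𝓝 0) →
      Tendsto (fun k => ν ((shiftMap (u k) ⁻¹' t) ∆ t)) atTop (𝓝 0) →
      Tendsto (fun k => ν ((shiftMap (u k) ⁻¹' (s ∪ t)) ∆ (s ∪ t))) atTop (𝓝 0) := by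
    intro s t hs ht
    have hadd := hs.add ht
    rw [add_zero] at hadd
    refine tendsto_of_tendsto_of_tendsto_of_le_of_le tendsto_const_nhds hadd
      (fun k => zero_le) (fun k => ?_)
    calc ν ((shiftMap (u k) ⁻¹' (s ∪ t)) ∆ (s ∪ t))
        ≤ ν (((shiftMap (u k) ⁻¹' s) ∆ s) ∪ ((shiftMap (u k) ⁻¹' t) ∆ t)) := by
          apply measure_mono
          rw [Set.preimage_union]
          exact union_symmDiff_union_subset _ _ _ _
      _ ≤ _ := measure_union_le _ _
  have hQfin : ∀ (f : ℕ → Set (H → ℝ)),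
      (∀ i, Tendsto (fun k => ν ((shiftMap (u k) ⁻¹' f i) ∆ f i)) atTop (𝓝 0)) →
      ∀ t : Finset ℕ,
        Tendsto (fun k => ν ((shiftMap (u k) ⁻¹' (⋃ i ∈ t, f i)) ∆ (⋃ i ∈ t, f i)))
          atTop (𝓝 0) := by
    intro f hf t
    classical
    induction t using Finset.induction_on with
    | empty => simpa using hQempty
    | @insert a t ha ih =>
        have h1 := hQunion _ _ (hf a) ih
        have h2 : (⋃ i ∈ insert a t, f i) = f a ∪ ⋃ i ∈ t, f i :=
          Finset.set_biUnion_insert a t f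
        rw [h2]
        exact h1
  have hQiUnion : ∀ f : ℕ → Set (H → ℝ), (∀ i, MeasurableSet (f i)) →
      (∀ i, Tendsto (fun k => ν ((shiftMap (u k) ⁻¹' f i) ∆ f i)) atTop (𝓝 0)) →
      Tendsto (fun k => ν ((shiftMap (u k) ⁻¹' (⋃ i, f i)) ∆ (⋃ i, f i))) atTop (𝓝 0) := by
    intro f hfm hfQ
    have hAm : ∀ N, MeasurableSet (Set.accumulate f N) := by
      intro N
      rw [Set.accumulate_def]
      exact MeasurableSet.biUnion (Set.to_countable _) fun i _ => hfm i
    have hAQ : ∀ N, Tendsto (fun k =>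
        ν ((shiftMap (u k) ⁻¹' Set.accumulate f N) ∆ Set.accumulate f N)) atTop (𝓝 0) := by
      intro N
      have hacc : Set.accumulate f N = ⋃ i ∈ Finset.range (N + 1), f i := by
        ext z
        simp [Set.mem_accumulate, Nat.lt_succ_iff]
      rw [hacc]
      exact hQfin f hfQ _
    have hdiff : Tendsto (fun N => ν ((⋃ i, f i) \ Set.accumulate f N)) atTop (𝓝 0) := by
      have h1 : ∀ N, ν ((⋃ i, f i) \ Set.accumulate f N) =
          ν (⋃ i, f i) - ν (Set.accumulate f N) := fun N =>
        measure_diff (Set.accumulate_subset_iUnion N) (hAm N).nullMeasurableSet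
          (measure_ne_top ν _)
      simp only [h1]
      have h2 := ENNReal.Tendsto.sub (tendsto_const_nhds (x := ν (⋃ i, f i)))
        (tendsto_measure_iUnion_accumulate (μ := ν) (f := f))
        (Or.inl (measure_ne_top ν _))
      simpa using h2
    rw [ENNReal.tendsto_atTop_zero]
    intro ε hε
    have hε2 : (0 : ENNReal) < ε / 2 := ENNReal.div_pos hε.ne' ENNReal.ofNat_ne_top
    have hε4 : (0 : ENNReal) < ε / 2 / 2 := ENNReal.div_pos hε2.ne' ENNReal.ofNat_ne_top
    obtain ⟨N, hN⟩ := (ENNReal.tendsto_atTop_zero.mp hdiff) (ε / 2 / 2) hε4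
    have hNN := hN N le_rfl
    obtain ⟨K, hK⟩ := (ENNReal.tendsto_atTop_zero.mp (hAQ N)) (ε / 2) hε2
    refine ⟨K, fun k hk => ?_⟩
    have hsb : Set.accumulate f N ⊆ ⋃ i, f i := Set.accumulate_subset_iUnion N
    have hsd : ν ((⋃ i, f i) ∆ Set.accumulate f N) ≤ ε / 2 / 2 := by
      rw [symmDiff_of_ge hsb]
      exact hNN
    calc ν ((shiftMap (u k) ⁻¹' (⋃ i, f i)) ∆ (⋃ i, f i))
        ≤ ν ((shiftMap (u k) ⁻¹' (⋃ i, f i)) ∆ (shiftMap (u k) ⁻¹' Set.accumulate f N)) +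
          (ν ((shiftMap (u k) ⁻¹' Set.accumulate f N) ∆ Set.accumulate f N) +
            ν (Set.accumulate f N ∆ (⋃ i, f i))) :=
          le_trans (measure_symmDiff_le _ (shiftMap (u k) ⁻¹' Set.accumulate f N) _)
            (add_le_add le_rfl (measure_symmDiff_le _ (Set.accumulate f N) _))
      _ ≤ ε / 2 / 2 + (ε / 2 + ε / 2 / 2) := by
          refine add_le_add ?_ (add_le_add (hK k hk) ?_)
          · rw [← Set.preimage_symmDiff,
              hinv (u k) _ ((MeasurableSet.iUnion hfm).symmDiff (hAm N))]
            exact hsd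
          · rw [symmDiff_comm]
            exact hsd
      _ = ε := by
          rw [add_comm (ε / 2) (ε / 2 / 2), ← add_assoc, ENNReal.add_halves,
            ENNReal.add_halves]
  let m' : MeasurableSpace (H → ℝ) :=
    { MeasurableSet' := fun s => MeasurableSet s ∧
        Tendsto (fun k => ν ((shiftMap (u k) ⁻¹' s) ∆ s)) atTop (𝓝 0)
      measurableSet_empty := ⟨MeasurableSet.empty, hQempty⟩
      measurableSet_compl := by
        rintro s ⟨hsm, hsQ⟩
        refine ⟨hsm.compl, ?_⟩
        have h0 : ∀ k, (shiftMap (u k) ⁻¹' sᶜ) ∆ sᶜ = (shiftMap (u k) ⁻¹' s) ∆ s := by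
          intro k
          rw [Set.preimage_compl, compl_symmDiff_compl]
        simp only [h0]
        exact hsQ
      measurableSet_iUnion := by
        intro f hf
        exact ⟨MeasurableSet.iUnion fun i => (hf i).1,
          hQiUnion f (fun i => (hf i).1) (fun i => (hf i).2)⟩ }
  have hle : (MeasurableSpace.pi : MeasurableSpace (H → ℝ)) ≤ m' := by
    refine iSup_le fun h₀ => ?_
    show MeasurableSpace.comap (fun b : H → ℝ => b h₀) Real.measurableSpace ≤ m'
    have hgen : (Real.measurableSpace : MeasurableSpace ℝ) =
        MeasurableSpace.generateFrom {s : Set ℝ | IsClosed s} := by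
      rw [BorelSpace.measurable_eq (α := ℝ), borel_eq_generateFrom_isClosed]
    rw [hgen, MeasurableSpace.comap_generateFrom]
    refine MeasurableSpace.generateFrom_le ?_
    rintro t ⟨B, hB, rfl⟩
    exact ⟨(measurable_pi_apply h₀) hB.measurableSet,
      tendsto_symmDiff_closed ν hinv hcont h₀ hB hu⟩
  exact (hle F hF).2

end Aux

lemma exists_countable_rep {ι : Type*} [Nonempty ι] {F : Set (ι → ℝ)}
    (hF : MeasurableSet F) :
    ∃ (e : ℕ → ι) (F₀ : Set (ℕ → ℝ)), MeasurableSet F₀ ∧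
      F = (fun y n => y (e n)) ⁻¹' F₀ := by
  let m₀ : MeasurableSpace (ι → ℝ) :=
    { MeasurableSet' := fun s => ∃ (e : ℕ → ι) (F₀ : Set (ℕ → ℝ)),
        MeasurableSet F₀ ∧ s = (fun y n => y (e n)) ⁻¹' F₀
      measurableSet_empty :=
        ⟨fun _ => Classical.arbitrary ι, ∅, MeasurableSet.empty, by simp⟩
      measurableSet_compl := by
        rintro s ⟨e, F₀, hF₀, rfl⟩
        exact ⟨e, F₀ᶜ, hF₀.compl, by rw [Set.preimage_compl]⟩
      measurableSet_iUnion := by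
        intro f hf
        choose e F₀ hF₀ hfe using hf
        refine ⟨fun m => e m.unpair.1 m.unpair.2,
          ⋃ i, (fun z : ℕ → ℝ => fun n => z (Nat.pair i n)) ⁻¹' F₀ i,
          MeasurableSet.iUnion fun i =>
            (measurable_pi_lambda _ fun n => measurable_pi_apply _) (hF₀ i), ?_⟩
        rw [Set.preimage_iUnion]
        refine Set.iUnion_congr fun i => ?_
        have hcomp : ((fun z : ℕ → ℝ => fun n => z (Nat.pair i n)) ∘
            (fun y : ι → ℝ => fun n => y ((fun m : ℕ => e (Nat.unpair m).1 (Nat.unpair m).2) n))) =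
            fun y n => y (e i n) := by
          funext y n
          simp [Function.comp, Nat.unpair_pair]
        rw [hfe i, ← Set.preimage_comp, hcomp] }
  have hle : (MeasurableSpace.pi : MeasurableSpace (ι → ℝ)) ≤ m₀ := by
    refine iSup_le fun i => ?_
    rintro s ⟨B, hB, rfl⟩
    exact ⟨fun _ => i, (fun z : ℕ → ℝ => z 0) ⁻¹' B, (measurable_pi_apply 0) hB, rfl⟩
  exact hle F hF

/-- for any stochastically continuous extension `(H, τ, Y)` of a separable
in probability stationary `G`-process `X`, `X` is `G`-ergodic iff `Y` is `H`-ergodic. -/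
theorem ergodic_iff_extension_ergodic
    {G : Type*} [Group G] {Ω : Type*} [MeasurableSpace Ω]
    (P : Measure Ω) [IsProbabilityMeasure P] (X : G → Ω → ℝ)
    (hmeas : ∀ g, Measurable (X g)) (hstat : Stationary P X)
    (hsep : SeparableInProbability P X)
    {H : Type*} [Group H] [TopologicalSpace H] [IsTopologicalGroup H] [PolishSpace H]
    (τ : G →* H) (hdense : DenseRange ⇑τ)
    {Ω' : Type*} [MeasurableSpace Ω'] (P' : Measure Ω') [IsProbabilityMeasure P']
    (Y : H → Ω' → ℝ) (hmeasY : ∀ h, Measurable (Y h)) (hstatY : Stationary P' Y)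
    (hcontY : StochasticallyContinuous P' Y)
    (hdist : procLaw P' (fun g => Y (τ g)) = procLaw P X) :
    ErgodicProcess P X ↔ ErgodicProcess P' Y := by
  classical
  have hYm : Measurable (fun ω (h : H) => Y h ω) := measurable_pi_lambda _ hmeasY
  set ν : Measure (H → ℝ) := procLaw P' Y with hνdef
  haveI : IsProbabilityMeasure ν := Measure.isProbabilityMeasure_map hYm.aemeasurable
  set π : (H → ℝ) → (G → ℝ) := fun y g => y (τ g) with hπdef
  have hπm : Measurable π := measurable_pi_lambda _ fun g => measurable_pi_apply _
  have hμ : procLaw P X = Measure.map π ν := by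
    rw [← hdist, hνdef]
    show _ = Measure.map π (Measure.map _ P')
    rw [Measure.map_map hπm hYm]
    rfl
  -- invariance of ν
  have hinvν : ∀ (h : H) (s : Set (H → ℝ)), MeasurableSet s → ν (shiftMap h ⁻¹' s) = ν s := by
    intro h s hs
    have hmapν : Measure.map (shiftMap h) ν = ν := by
      rw [hνdef]
      show Measure.map (shiftMap h) (Measure.map _ P') = _
      rw [Measure.map_map (measurable_shiftMap h) hYm]
      exact hstatY h⁻¹
    rw [← Measure.map_apply (measurable_shiftMap h) hs, hmapν]
  -- coordinate convergence in ν-measure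
  have hcontν : ∀ (h₀ : H) (u : ℕ → H), Tendsto u atTop (𝓝 h₀) →
      TendstoInMeasure ν (fun k x => x (u k)) atTop (fun x => x h₀) := by
    intro h₀ u hu ε hε
    have hset : ∀ a : H, MeasurableSet {x : H → ℝ | ε ≤ edist (x a) (x h₀)} := fun a =>
      measurableSet_le measurable_const ((measurable_pi_apply a).edist (measurable_pi_apply h₀))
    have hmapeq : ∀ a : H, ν {x : H → ℝ | ε ≤ edist (x a) (x h₀)}
        = P' {ω | ε ≤ edist (Y a ω) (Y h₀ ω)} := by
      intro a
      rw [hνdef]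
      show Measure.map _ P' _ = _
      rw [Measure.map_apply hYm (hset a)]
      rfl
    have hc := (hcontY h₀ ε hε).comp hu
    exact hc.congr fun k => (hmapeq (u k)).symm
  -- density of τ(G): approximating sequences
  have hseq : ∀ h : H, ∃ s : ℕ → G, Tendsto (fun k => τ (s k)) atTop (𝓝 h) := by
    intro h
    have hcl : h ∈ closure (Set.range ⇑τ) := hdense h
    obtain ⟨φ, hφmem, hφlim⟩ := mem_closure_iff_seq_limit.mp hcl
    choose s hs using hφmem
    exact ⟨s, Tendsto.congr (fun k => (hs k).symm) hφlim⟩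
  have hcommE : ∀ (g : G) (E : Set (G → ℝ)),
      π ⁻¹' (shiftMap g ⁻¹' E) = shiftMap (τ g) ⁻¹' (π ⁻¹' E) := by
    intro g E
    rw [← Set.preimage_comp, ← Set.preimage_comp]
    have : (shiftMap g ∘ π) = (π ∘ shiftMap (τ g)) := by
      funext y g'
      show y (τ (g⁻¹ * g')) = y ((τ g)⁻¹ * τ g')
      rw [map_mul, map_inv]
    rw [this]
  constructor
  · -- X ergodic → Y ergodic
    intro hX F hF hFinv
    obtain ⟨e, F₀, hF₀, rfl⟩ := exists_countable_rep hF
    have hΦem : Measurable (fun y : H → ℝ => fun n => y (e n)) :=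
      measurable_pi_lambda _ fun n => measurable_pi_apply _
    have hqex : ∀ n : ℕ, ∃ q : ℕ → G,
        ∀ᵐ y ∂ν, Tendsto (fun k => y (τ (q k))) atTop (𝓝 (y (e n))) := by
      intro n
      obtain ⟨s, hs⟩ := hseq (e n)
      have h1 : TendstoInMeasure ν (fun k x => x (τ (s k))) atTop (fun x => x (e n)) :=
        hcontν (e n) (fun k => τ (s k)) hs
      obtain ⟨ns, _, hae⟩ := h1.exists_seq_tendsto_ae
      exact ⟨fun k => s (ns k), hae⟩
    choose q hq using hqex
    have hfmeas : ∀ (n k : ℕ), Measurable fun x : G → ℝ => x (q n k) := fun n k =>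
      measurable_pi_apply _
    have hLex : ∀ n : ℕ, ∃ L : (G → ℝ) → ℝ, Measurable L ∧
        ∀ᵐ x ∂(procLaw P X), Tendsto (fun k => x (q n k)) atTop (𝓝 (L x)) := by
      intro n
      apply measurable_limit_of_tendsto_metrizable_ae (fun k => (hfmeas n k).aemeasurable)
      rw [hμ, MeasureTheory.ae_map_iff hπm.aemeasurable
        (measurableSet_exists_tendsto fun k => hfmeas n k)]
      filter_upwards [hq n] with y hy
      exact ⟨y (e n), hy⟩
    choose L hLm hL using hLex
    have hLe : ∀ᵐ y ∂ν, ∀ n, L n (π y) = y (e n) := by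
      rw [MeasureTheory.ae_all_iff]
      intro n
      have h2 : ∀ᵐ y ∂ν, Tendsto (fun k => y (τ (q n k))) atTop (𝓝 (L n (π y))) := by
        have h3 := hL n
        rw [hμ, MeasureTheory.ae_map_iff hπm.aemeasurable
          (measurableSet_tendsto_fun (fun k => hfmeas n k) (hLm n))] at h3
        exact h3
      filter_upwards [h2, hq n] with y hy1 hy2
      exact tendsto_nhds_unique hy1 hy2
    set E : Set (G → ℝ) := (fun x => fun n => L n x) ⁻¹' F₀ with hEdef
    have hΘm : Measurable (fun x : G → ℝ => fun n => L n x) :=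
      measurable_pi_lambda _ hLm
    have hEm : MeasurableSet E := hΘm hF₀
    have hπEm : MeasurableSet (π ⁻¹' E) := hπm hEm
    have hFsetm : MeasurableSet ((fun y : H → ℝ => fun n => y (e n)) ⁻¹' F₀) := hΦem hF₀
    have hsym0 : ν ((π ⁻¹' E) ∆ ((fun y : H → ℝ => fun n => y (e n)) ⁻¹' F₀)) = 0 := by
      have hsub : (π ⁻¹' E) ∆ ((fun y : H → ℝ => fun n => y (e n)) ⁻¹' F₀) ⊆
          {y : H → ℝ | ¬ ∀ n, L n (π y) = y (e n)} := by
        intro y hy hcontra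
        have hfun : (fun n => L n (π y)) = fun n => y (e n) := funext hcontra
        rcases Set.mem_symmDiff.mp hy with ⟨h1, h2⟩ | ⟨h1, h2⟩
        · refine h2 ?_
          have h1' : (fun n => L n (π y)) ∈ F₀ := h1
          rwa [hfun] at h1'
        · refine h2 ?_
          show (fun n => L n (π y)) ∈ F₀
          rw [hfun]
          exact h1
      exact measure_mono_null hsub (MeasureTheory.ae_iff.mp hLe)
    have hEinv : ∀ g : G, procLaw P X ((shiftMap g ⁻¹' E) ∆ E) = 0 := by
      intro g
      rw [hμ, Measure.map_apply hπm (((measurable_shiftMap g) hEm).symmDiff hEm),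
        Set.preimage_symmDiff, hcommE g E]
      set Fs : Set (H → ℝ) := (fun y : H → ℝ => fun n => y (e n)) ⁻¹' F₀ with hFs
      have h1 : ν ((shiftMap (τ g) ⁻¹' (π ⁻¹' E)) ∆ (π ⁻¹' E)) ≤
          ν ((shiftMap (τ g) ⁻¹' (π ⁻¹' E)) ∆ (shiftMap (τ g) ⁻¹' Fs)) +
          (ν ((shiftMap (τ g) ⁻¹' Fs) ∆ Fs) + ν (Fs ∆ (π ⁻¹' E))) :=
        le_trans (measure_symmDiff_le _ (shiftMap (τ g) ⁻¹' Fs) _)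
          (add_le_add le_rfl (measure_symmDiff_le _ Fs _))
      rw [← Set.preimage_symmDiff, hinvν _ _ (hπEm.symmDiff hFsetm), hsym0,
        hFinv (τ g), symmDiff_comm Fs (π ⁻¹' E), hsym0, add_zero, add_zero] at h1
      exact le_antisymm h1 zero_le
    have hμE : procLaw P X E = ν (π ⁻¹' E) := by
      rw [hμ, Measure.map_apply hπm hEm]
    have hνF : ν ((fun y : H → ℝ => fun n => y (e n)) ⁻¹' F₀) = ν (π ⁻¹' E) :=
      (measure_congr (MeasureTheory.measure_symmDiff_eq_zero_iff.mp hsym0)).symm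
    rcases hX E hEm hEinv with h0 | h1
    · left
      rw [hνdef] at hνF hμE
      rw [hνF, ← hμE]
      exact h0
    · right
      rw [hνdef] at hνF hμE
      rw [hνF, ← hμE]
      exact h1
  · -- Y ergodic → X ergodic
    intro hY E hE hEinv
    set F : Set (H → ℝ) := π ⁻¹' E with hFdef
    have hFm : MeasurableSet F := hπm hE
    have hF0 : ∀ g : G, ν ((shiftMap (τ g) ⁻¹' F) ∆ F) = 0 := by
      intro g
      have h1 : (shiftMap (τ g) ⁻¹' F) ∆ F = π ⁻¹' ((shiftMap g ⁻¹' E) ∆ E) := by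
        rw [Set.preimage_symmDiff, hcommE]
      rw [h1, ← Measure.map_apply hπm (((measurable_shiftMap g) hE).symmDiff hE), ← hμ]
      exact hEinv g
    have hFall : ∀ h : H, ν ((shiftMap h ⁻¹' F) ∆ F) = 0 := by
      intro h
      obtain ⟨s, hs⟩ := hseq h
      have hu1 : Tendsto (fun k => (τ (s k))⁻¹ * h) atTop (𝓝 1) := by
        have h2 := (hs.inv).mul (tendsto_const_nhds (x := h))
        simpa using h2
      have key : ∀ k, ν ((shiftMap h ⁻¹' F) ∆ F) ≤
          ν ((shiftMap ((τ (s k))⁻¹ * h) ⁻¹' F) ∆ F) := by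
        intro k
        have hAm : MeasurableSet (shiftMap (τ (s k)) ⁻¹' F) := (measurable_shiftMap _) hFm
        have hAF : ν ((shiftMap (τ (s k)) ⁻¹' F) ∆ F) = 0 := hF0 (s k)
        have hFA : ν (F ∆ (shiftMap (τ (s k)) ⁻¹' F)) = 0 := by rw [symmDiff_comm]; exact hAF
        have hpre : shiftMap h ⁻¹' F =
            shiftMap ((τ (s k))⁻¹ * h) ⁻¹' (shiftMap (τ (s k)) ⁻¹' F) := by
          have h5 : shiftMap (τ (s k)) ∘ shiftMap ((τ (s k))⁻¹ * h) = shiftMap h := by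
            rw [shiftMap_comp, mul_inv_cancel_left]
          rw [← h5]
          rfl
        calc ν ((shiftMap h ⁻¹' F) ∆ F)
            ≤ ν ((shiftMap h ⁻¹' F) ∆ (shiftMap (τ (s k)) ⁻¹' F)) +
              ν ((shiftMap (τ (s k)) ⁻¹' F) ∆ F) :=
            measure_symmDiff_le _ (shiftMap (τ (s k)) ⁻¹' F) _
          _ = ν ((shiftMap ((τ (s k))⁻¹ * h) ⁻¹' (shiftMap (τ (s k)) ⁻¹' F)) ∆
              (shiftMap (τ (s k)) ⁻¹' F)) := by rw [hAF, add_zero, hpre]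
          _ ≤ ν ((shiftMap ((τ (s k))⁻¹ * h) ⁻¹' (shiftMap (τ (s k)) ⁻¹' F)) ∆
                (shiftMap ((τ (s k))⁻¹ * h) ⁻¹' F)) +
              (ν ((shiftMap ((τ (s k))⁻¹ * h) ⁻¹' F) ∆ F) +
                ν (F ∆ (shiftMap (τ (s k)) ⁻¹' F))) :=
            le_trans (measure_symmDiff_le _ (shiftMap ((τ (s k))⁻¹ * h) ⁻¹' F) _)
              (add_le_add le_rfl (measure_symmDiff_le _ F _))
          _ = ν ((shiftMap ((τ (s k))⁻¹ * h) ⁻¹' F) ∆ F) := by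
              rw [← Set.preimage_symmDiff, hinvν _ _ (hAm.symmDiff hFm), hAF, hFA,
                zero_add, add_zero]
      have hlim := tendsto_measure_symmDiff_shift ν hinvν hcontν hFm hu1
      have hle0 : ν ((shiftMap h ⁻¹' F) ∆ F) ≤ 0 :=
        ge_of_tendsto hlim (Eventually.of_forall key)
      exact le_antisymm hle0 zero_le
    have hres := hY F hFm (by rw [hνdef] at hFall; exact hFall)
    have hμE : procLaw P X E = ν F := by
      rw [hμ, Measure.map_apply hπm hE]
    rw [hνdef] at hμE
    rcases hres with h0 | h1
    · left; rw [hμE]; exact h0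
    · right; rw [hμE]; exact h1


end Paper
end
end

section
/- Let G be a group, X a separable in probability stationary G-process, and let (Ĝ, τ, X̂) be any stochastically continuous extension of X. Then X is G-weakly mixing if and only if X̂ is Ĝ-weakly mixing. -/
open MeasureTheory ProbabilityTheory Filter Topology symmDiff

noncomputable section

namespace Paper

variable {G : Type*} {Ω : Type*}

section AuxWM

open scoped ENNReal NNReal

variable {α : Type*}

private lemma symmDiff_union_subset' (A B C D : Set α) :
    (A ∪ B) ∆ (C ∪ D) ⊆ (A ∆ C) ∪ (B ∆ D) := by
  intro x hx
  simp only [Set.mem_symmDiff, Set.mem_union] at hx ⊢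
  tauto

private lemma symmDiff_iUnion_subset' (A B : ℕ → Set α) :
    (⋃ i, A i) ∆ (⋃ i, B i) ⊆ ⋃ i, (A i ∆ B i) := by
  intro x hx
  rcases hx with ⟨⟨h1, h2⟩⟩ | ⟨h1, h2⟩
  · obtain ⟨i, hi⟩ := Set.mem_iUnion.1 h1
    exact Set.mem_iUnion.2 ⟨i, Or.inl ⟨hi, fun h => h2 (Set.mem_iUnion.2 ⟨i, h⟩)⟩⟩
  · obtain ⟨i, hi⟩ := Set.mem_iUnion.1 h1
    exact Set.mem_iUnion.2 ⟨i, Or.inr ⟨hi, fun h => h2 (Set.mem_iUnion.2 ⟨i, h⟩)⟩⟩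

private lemma shiftMap_shiftMap {K : Type*} [Group K] (a b : K) (x : K → ℝ) :
    shiftMap a (shiftMap b x) = shiftMap (a * b) x := by
  funext h
  simp [shiftMap, mul_inv_rev, mul_assoc]

variable [MeasurableSpace α]

private lemma good_of_approx (κ : Measure α) [IsProbabilityMeasure κ]
    (S : ℕ → α → α) (hSp : ∀ n (A : Set α), MeasurableSet A → κ (S n ⁻¹' A) = κ A)
    {A : Set α} (hA : MeasurableSet A)
    (happ : ∀ ε : ℝ≥0∞, 0 < ε → ε ≠ ⊤ → ∃ B : Set α, MeasurableSet B ∧ κ (A ∆ B) ≤ ε ∧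
      Tendsto (fun n => κ ((S n ⁻¹' B) ∆ B)) atTop (𝓝 0)) :
    Tendsto (fun n => κ ((S n ⁻¹' A) ∆ A)) atTop (𝓝 0) := by
  rw [ENNReal.tendsto_nhds_zero]
  intro ε hε
  rcases eq_or_ne ε ⊤ with rfl | hεtop
  · exact Eventually.of_forall fun n => le_top
  obtain ⟨B, hB, hAB, hBgood⟩ := happ (ε / 2 / 2)
    (ENNReal.half_pos (ENNReal.half_pos hε.ne').ne') (by simp [ENNReal.div_eq_top, hεtop])
  have hev := ENNReal.tendsto_nhds_zero.1 hBgood (ε / 2) (ENNReal.half_pos hε.ne')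
  filter_upwards [hev] with n hn
  have step1 : κ ((S n ⁻¹' A) ∆ A) ≤
      κ ((S n ⁻¹' A) ∆ (S n ⁻¹' B)) + κ ((S n ⁻¹' B) ∆ B) + κ (B ∆ A) := by
    calc κ ((S n ⁻¹' A) ∆ A) ≤ κ ((S n ⁻¹' A) ∆ B) + κ (B ∆ A) :=
          measure_symmDiff_le _ _ _
      _ ≤ (κ ((S n ⁻¹' A) ∆ (S n ⁻¹' B)) + κ ((S n ⁻¹' B) ∆ B)) + κ (B ∆ A) := by
          gcongr
          exact measure_symmDiff_le _ _ _
  have e1 : κ ((S n ⁻¹' A) ∆ (S n ⁻¹' B)) = κ (A ∆ B) := by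
    rw [← Set.preimage_symmDiff, hSp n _ (hA.symmDiff hB)]
  have e2 : κ (B ∆ A) = κ (A ∆ B) := by rw [symmDiff_comm]
  calc κ ((S n ⁻¹' A) ∆ A) ≤ κ (A ∆ B) + κ ((S n ⁻¹' B) ∆ B) + κ (A ∆ B) := by
        rw [e1, e2] at step1; exact step1
    _ ≤ ε / 2 / 2 + ε / 2 + ε / 2 / 2 := by gcongr
    _ = ε := by
        rw [add_comm (ε / 2 / 2) (ε / 2), add_assoc, ENNReal.add_halves, ENNReal.add_halves]

private lemma good_union (κ : Measure α) (S : ℕ → α → α) {A B : Set α}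
    (hA : Tendsto (fun n => κ ((S n ⁻¹' A) ∆ A)) atTop (𝓝 0))
    (hB : Tendsto (fun n => κ ((S n ⁻¹' B) ∆ B)) atTop (𝓝 0)) :
    Tendsto (fun n => κ ((S n ⁻¹' (A ∪ B)) ∆ (A ∪ B))) atTop (𝓝 0) := by
  have hle : ∀ n, κ ((S n ⁻¹' (A ∪ B)) ∆ (A ∪ B)) ≤
      κ ((S n ⁻¹' A) ∆ A) + κ ((S n ⁻¹' B) ∆ B) := fun n => by
    rw [Set.preimage_union]
    exact le_trans (measure_mono (symmDiff_union_subset' _ _ _ _)) (measure_union_le _ _)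
  have := hA.add hB
  rw [add_zero] at this
  exact tendsto_of_tendsto_of_tendsto_of_le_of_le tendsto_const_nhds this
    (fun n => zero_le) hle

private lemma good_of_generateFrom {mα : MeasurableSpace α}
    (κ : Measure α) [IsProbabilityMeasure κ]
    (S : ℕ → α → α)
    (hSp : ∀ n (A : Set α), MeasurableSet A → κ (S n ⁻¹' A) = κ A)
    (C : Set (Set α)) (hgen : mα = MeasurableSpace.generateFrom C)
    (hbase : ∀ A ∈ C, Tendsto (fun n => κ ((S n ⁻¹' A) ∆ A)) atTop (𝓝 0))
    {A : Set α} (hA : MeasurableSet A) :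
    Tendsto (fun n => κ ((S n ⁻¹' A) ∆ A)) atTop (𝓝 0) := by
  have hms : ∀ s : Set α, MeasurableSet[MeasurableSpace.generateFrom C] s →
      MeasurableSet[mα] s := fun s hs => by rw [hgen]; exact hs
  rw [hgen] at hA
  refine MeasurableSpace.generateFrom_induction C
    (p := fun s _ => Tendsto (fun n => κ ((S n ⁻¹' s) ∆ s)) atTop (𝓝 0))
    (fun t ht _ => hbase t ht) ?_ ?_ ?_ A hA
  · simpa using tendsto_const_nhds
  · intro t _ ih
    simpa only [Set.preimage_compl, compl_symmDiff_compl] using ih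
  · intro f hf ih
    refine good_of_approx κ S hSp (hms _ (.iUnion hf)) ?_
    intro ε hε hεtop
    have hacc : ∀ N, MeasurableSet[mα] (Set.accumulate f N) := by
      intro N
      refine MeasurableSet.biUnion (Set.to_countable _) fun i _ => hms _ (hf i)
    have hUm : MeasurableSet[mα] (⋃ i, f i) := hms _ (.iUnion hf)
    have hd : Tendsto (fun N => κ ((⋃ i, f i) \ Set.accumulate f N)) atTop
        (𝓝 (κ (⋂ N, (⋃ i, f i) \ Set.accumulate f N))) := by
      refine tendsto_measure_iInter_atTop
        (fun N => (hUm.diff (hacc N)).nullMeasurableSet) ?_ ⟨0, measure_ne_top _ _⟩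
      intro N M hNM
      exact Set.diff_subset_diff_right (Set.monotone_accumulate hNM)
    have hiempty : (⋂ N, (⋃ i, f i) \ Set.accumulate f N) = ∅ := by
      rw [← Set.diff_iUnion, Set.iUnion_accumulate, Set.diff_self]
    rw [hiempty, measure_empty] at hd
    have acc_zero : Set.accumulate f 0 = f 0 := by
      ext x; simp [Set.mem_accumulate, Nat.le_zero]
    have acc_succ : ∀ M, Set.accumulate f (M + 1) = Set.accumulate f M ∪ f (M + 1) := by
      intro M; ext x
      simp only [Set.mem_accumulate, Set.mem_union, Nat.le_add_one_iff]
      constructor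
      · rintro ⟨y, hy | rfl, hx⟩
        · exact Or.inl ⟨y, hy, hx⟩
        · exact Or.inr hx
      · rintro (⟨y, hy, hx⟩ | hx)
        · exact ⟨y, Or.inl hy, hx⟩
        · exact ⟨M + 1, Or.inr rfl, hx⟩
    have hgoodacc : ∀ N, Tendsto
        (fun n => κ ((S n ⁻¹' Set.accumulate f N) ∆ Set.accumulate f N)) atTop (𝓝 0) := by
      intro N
      induction N with
      | zero => rw [acc_zero]; exact ih 0
      | succ M ihM => rw [acc_succ M]; exact good_union κ S ihM (ih (M + 1))
    obtain ⟨N, hN⟩ := (ENNReal.tendsto_nhds_zero.1 hd ε hε).exists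
    refine ⟨Set.accumulate f N, hacc N, ?_, hgoodacc N⟩
    rw [symmDiff_of_ge ((Set.accumulate_subset_iUnion (s := f)) N)]
    exact hN

private lemma exists_approx_of_generateFrom {β : Type*} {mα : MeasurableSpace α}
    [MeasurableSpace β] (κ : Measure α) (f : α → β)
    (C : Set (Set α)) (hgen : mα = MeasurableSpace.generateFrom C)
    (hbase : ∀ A ∈ C, ∃ E : Set β, MeasurableSet E ∧ κ (A ∆ (f ⁻¹' E)) = 0)
    {A : Set α} (hA : MeasurableSet A) :
    ∃ E : Set β, MeasurableSet E ∧ κ (A ∆ (f ⁻¹' E)) = 0 := by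
  rw [hgen] at hA
  refine MeasurableSpace.generateFrom_induction C
    (p := fun s _ => ∃ E : Set β, MeasurableSet E ∧ κ (s ∆ (f ⁻¹' E)) = 0)
    (fun t ht _ => hbase t ht) ?_ ?_ ?_ A hA
  · exact ⟨∅, MeasurableSet.empty, by simp⟩
  · rintro t _ ⟨E, hE, h0⟩
    exact ⟨Eᶜ, hE.compl, by rwa [Set.preimage_compl, compl_symmDiff_compl]⟩
  · rintro s hs ih
    choose E hE h0 using ih
    refine ⟨⋃ i, E i, MeasurableSet.iUnion hE, ?_⟩
    rw [Set.preimage_iUnion]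
    refine measure_mono_null (symmDiff_iUnion_subset' _ _) (measure_iUnion_null h0)

private lemma tendsto_symmDiff_lt_of_nonatom (κ : Measure α) [IsProbabilityMeasure κ]
    {Zn : ℕ → α → ℝ} {Z : α → ℝ} (hZ : Measurable Z)
    (h : TendstoInMeasure κ Zn atTop Z) {a : ℝ} (ha : κ {x | Z x = a} = 0) :
    Tendsto (fun n => κ ({x | Zn n x < a} ∆ {x | Z x < a})) atTop (𝓝 0) := by
  rw [ENNReal.tendsto_nhds_zero]
  intro ε hε
  have hmZd : Measurable fun x => dist (Z x) a := hZ.dist measurable_const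
  have hiInter : Tendsto (fun m : ℕ => κ {x | dist (Z x) a ≤ 1 / (m + 1)}) atTop (𝓝 0) := by
    have h1 := tendsto_measure_iInter_atTop (μ := κ)
      (s := fun m : ℕ => {x | dist (Z x) a ≤ 1 / (m + 1)})
      (fun m => (measurableSet_le hmZd measurable_const).nullMeasurableSet)
      ?_ ⟨0, measure_ne_top _ _⟩
    · have hI : (⋂ m : ℕ, {x | dist (Z x) a ≤ 1 / (m + 1 : ℝ)}) = {x | Z x = a} := by
        ext x
        simp only [Set.mem_iInter, Set.mem_setOf_eq]
        constructor
        · intro hall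
          by_contra hne
          have hdpos : 0 < dist (Z x) a := dist_pos.2 hne
          obtain ⟨m, hm⟩ := exists_nat_one_div_lt hdpos
          exact absurd (hall m) (not_le.2 hm)
        · intro heq m
          rw [heq, dist_self]
          positivity
      rwa [hI, ha] at h1
    · intro m m' hmm'
      intro x hx
      simp only [Set.mem_setOf_eq] at hx ⊢
      refine hx.trans ?_
      gcongr <;> exact_mod_cast hmm'
  obtain ⟨m, hm⟩ := (ENNReal.tendsto_nhds_zero.1 hiInter (ε / 2)
    (ENNReal.half_pos hε.ne')).exists
  set δ : ℝ := 1 / (m + 1) with hδdef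
  have hδpos : (0 : ℝ) < δ := by positivity
  have hev := ENNReal.tendsto_nhds_zero.1 (tendstoInMeasure_iff_dist.1 h δ hδpos) (ε / 2) (ENNReal.half_pos hε.ne')
  filter_upwards [hev] with n hn
  have hsub : {x | Zn n x < a} ∆ {x | Z x < a} ⊆
      {x | δ ≤ dist (Zn n x) (Z x)} ∪ {x | dist (Z x) a ≤ δ} := by
    intro x hx
    rcases le_or_gt δ (dist (Zn n x) (Z x)) with h' | h'
    · exact Or.inl h'
    · right
      rw [Real.dist_eq, abs_sub_lt_iff] at h'
      rcases hx with ⟨⟨h1, h2⟩⟩ | ⟨h1, h2⟩ <;>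
        · simp only [Set.mem_setOf_eq, not_lt] at h1 h2 ⊢
          rw [Real.dist_eq, abs_le]
          constructor <;> linarith
  calc κ ({x | Zn n x < a} ∆ {x | Z x < a})
      ≤ κ ({x | δ ≤ dist (Zn n x) (Z x)} ∪ {x | dist (Z x) a ≤ δ}) := measure_mono hsub
    _ ≤ κ {x | δ ≤ dist (Zn n x) (Z x)} + κ {x | dist (Z x) a ≤ δ} := measure_union_le _ _
    _ ≤ ε / 2 + ε / 2 := add_le_add hn hm
    _ = ε := ENNReal.add_halves ε

private lemma good_threshold (κ : Measure α) [IsProbabilityMeasure κ]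
    (S : ℕ → α → α)
    (hSp : ∀ n (A : Set α), MeasurableSet A → κ (S n ⁻¹' A) = κ A)
    {Z : α → ℝ} (hZ : Measurable Z)
    (hTM : TendstoInMeasure κ (fun n x => Z (S n x)) atTop Z) (q : ℝ) :
    Tendsto (fun n => κ ((S n ⁻¹' {x | Z x < q}) ∆ {x | Z x < q})) atTop (𝓝 0) := by
  have hatoms : {t : ℝ | 0 < κ {x | Z x = t}}.Countable :=
    Measure.countable_meas_level_set_pos hZ
  refine good_of_approx κ S hSp (measurableSet_lt hZ measurable_const) ?_
  intro ε hε hεtop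
  -- find m with κ {x | q - 1/(m+1) ≤ Z x < q} ≤ ε
  have hw : Tendsto (fun m : ℕ => κ ({x | q - 1 / (m + 1) ≤ Z x} ∩ {x | Z x < q})) atTop
      (𝓝 0) := by
    have h1 := tendsto_measure_iInter_atTop (μ := κ)
      (s := fun m : ℕ => {x | q - 1 / (m + 1) ≤ Z x} ∩ {x | Z x < q})
      (fun m => ((measurableSet_le measurable_const hZ).inter
        (measurableSet_lt hZ measurable_const)).nullMeasurableSet) ?_ ⟨0, measure_ne_top _ _⟩
    · have hI : (⋂ m : ℕ, ({x | q - 1 / (m + 1 : ℝ) ≤ Z x} ∩ {x | Z x < q})) = ∅ := by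
        ext x
        simp only [Set.mem_iInter, Set.mem_inter_iff, Set.mem_setOf_eq, Set.mem_empty_iff_false,
          iff_false, not_forall]
        by_cases hq : Z x < q
        · obtain ⟨m, hm⟩ := exists_nat_one_div_lt (sub_pos.2 hq)
          exact ⟨m, fun hc => absurd hc.1 (by push_neg; linarith)⟩
        · exact ⟨0, fun hc => hq hc.2⟩
      rwa [hI, measure_empty] at h1
    · intro m m' hmm' x hx
      simp only [Set.mem_inter_iff, Set.mem_setOf_eq] at hx ⊢
      refine ⟨le_trans (by gcongr <;> exact_mod_cast hmm') hx.1, hx.2⟩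
  obtain ⟨m, hm⟩ := (ENNReal.tendsto_nhds_zero.1 hw ε hε).exists
  -- pick a non-atom a in [q - 1/(m+1), q)
  have hlt : q - 1 / (m + 1 : ℝ) < q := by
    have : (0 : ℝ) < 1 / (m + 1) := by positivity
    linarith
  have hexa : ∃ a ∈ Set.Ico (q - 1 / (m + 1 : ℝ)) q, κ {x | Z x = a} = 0 := by
    by_contra hcon
    push_neg at hcon
    have hsub : Set.Ico (q - 1 / (m + 1 : ℝ)) q ⊆ {t : ℝ | 0 < κ {x | Z x = t}} := by
      intro t ht
      exact pos_iff_ne_zero.2 (hcon t ht)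
    have h0 : (volume : Measure ℝ) (Set.Ico (q - 1 / (m + 1 : ℝ)) q) = 0 :=
      measure_mono_null hsub (hatoms.measure_zero volume)
    rw [Real.volume_Ico] at h0
    exact absurd h0 (by simp [ENNReal.ofReal_eq_zero]; linarith)
  obtain ⟨a, ⟨ha1, ha2⟩, hana⟩ := hexa
  refine ⟨{x | Z x < a}, measurableSet_lt hZ measurable_const, ?_, ?_⟩
  · have hBA : {x | Z x < a} ⊆ {x | Z x < q} := fun x hx => lt_trans hx ha2
    rw [symmDiff_of_ge hBA]
    refine le_trans (measure_mono ?_) hm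
    intro x hx
    simp only [Set.mem_diff, Set.mem_setOf_eq, not_lt] at hx
    exact ⟨le_trans ha1 hx.2, hx.1⟩
  · simpa only [Set.preimage_setOf_eq] using
      tendsto_symmDiff_lt_of_nonatom κ hZ hTM hana

end AuxWM

/-- for any stochastically continuous extension `(H, τ, Y)` of a separable
in probability stationary `G`-process `X`, `X` is `G`-weakly mixing iff `Y` is
`H`-weakly mixing. -/
theorem weaklyMixing_iff_extension_weaklyMixing
    {G : Type*} [Group G] {Ω : Type*} [MeasurableSpace Ω]
    (P : Measure Ω) [IsProbabilityMeasure P] (X : G → Ω → ℝ)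
    (hmeas : ∀ g, Measurable (X g)) (hstat : Stationary P X)
    (hsep : SeparableInProbability P X)
    {H : Type*} [Group H] [TopologicalSpace H] [IsTopologicalGroup H] [PolishSpace H]
    (τ : G →* H) (hdense : DenseRange ⇑τ)
    {Ω' : Type*} [MeasurableSpace Ω'] (P' : Measure Ω') [IsProbabilityMeasure P']
    (Y : H → Ω' → ℝ) (hmeasY : ∀ h, Measurable (Y h)) (hstatY : Stationary P' Y)
    (hcontY : StochasticallyContinuous P' Y)
    (hdist : procLaw P' (fun g => Y (τ g)) = procLaw P X) :
    WeaklyMixingProcess P X ↔ WeaklyMixingProcess P' Y := by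
  classical
  -- notation
  set W := (H → ℝ) × (H → ℝ) with hWdef
  have hmeasι : Measurable (fun ω (h : H) => Y h ω) := measurable_pi_lambda _ hmeasY
  have hmeasιX : Measurable (fun ω (g : G) => X g ω) := measurable_pi_lambda _ hmeas
  haveI hνP : IsProbabilityMeasure (procLaw P' Y) :=
    Measure.isProbabilityMeasure_map hmeasι.aemeasurable
  haveI hμP : IsProbabilityMeasure (procLaw P X) :=
    Measure.isProbabilityMeasure_map hmeasιX.aemeasurable
  set ν : Measure (H → ℝ) := procLaw P' Y with hνdef
  set μG : Measure (G → ℝ) := procLaw P X with hμdef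
  set ρ : Measure W := ν.prod ν with hρdef
  set σm : Measure ((G → ℝ) × (G → ℝ)) := μG.prod μG with hσdef
  haveI : IsProbabilityMeasure ρ := by rw [hρdef]; infer_instance
  -- the restriction map
  set π : (H → ℝ) → (G → ℝ) := fun x g => x (τ g) with hπdef
  have hπm : Measurable π := measurable_pi_lambda _ fun g => measurable_pi_apply _
  have hπν : Measure.map π ν = μG := by
    rw [← hdist]
    show Measure.map π (Measure.map (fun ω h => Y h ω) P') = _
    rw [Measure.map_map hπm hmeasι]
    rfl
  -- shift maps
  have hshiftm : ∀ h : H, Measurable (shiftMap (G := H) h) :=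
    fun h => measurable_pi_lambda _ fun k => measurable_pi_apply _
  have hshiftmG : ∀ g : G, Measurable (shiftMap (G := G) g) :=
    fun g => measurable_pi_lambda _ fun k => measurable_pi_apply _
  have hmapshift : ∀ h : H, Measure.map (shiftMap h) ν = ν := by
    intro h
    rw [hνdef]
    show Measure.map (shiftMap h) (Measure.map (fun ω k => Y k ω) P') = _
    rw [Measure.map_map (hshiftm h) hmeasι]
    exact hstatY h⁻¹
  -- diagonal shifts on W
  set T : H → W → W := fun h p => (shiftMap h p.1, shiftMap h p.2) with hTdef
  have hTm : ∀ h, Measurable (T h) :=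
    fun h => ((hshiftm h).comp measurable_fst).prodMk ((hshiftm h).comp measurable_snd)
  have hTmap : ∀ h, Measure.map (T h) ρ = ρ := by
    intro h
    have hTeq : T h = Prod.map (shiftMap h) (shiftMap h) := rfl
    rw [hTeq, hρdef, ← Measure.map_prod_map _ _ (hshiftm h) (hshiftm h), hmapshift h]
  have hTpre : ∀ h (A : Set W), MeasurableSet A → ρ (T h ⁻¹' A) = ρ A := by
    intro h A hA
    conv_rhs => rw [← hTmap h]
    rw [Measure.map_apply (hTm h) hA]
  -- product restriction map
  set Q : W → (G → ℝ) × (G → ℝ) := Prod.map π π with hQdef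
  have hQm : Measurable Q := (hπm.comp measurable_fst).prodMk (hπm.comp measurable_snd)
  have hQmap : Measure.map Q ρ = σm := by
    rw [hQdef, hρdef, ← Measure.map_prod_map _ _ hπm hπm, hπν, hσdef]
  have hQpre : ∀ (E : Set ((G → ℝ) × (G → ℝ))), MeasurableSet E → ρ (Q ⁻¹' E) = σm E := by
    intro E hE
    conv_rhs => rw [← hQmap]
    rw [Measure.map_apply hQm hE]
  -- commutation
  have hcomm : ∀ g : G,
      Q ∘ T (τ g) = (fun p : (G → ℝ) × (G → ℝ) => (shiftMap g p.1, shiftMap g p.2)) ∘ Q := by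
    intro g
    funext p
    have hcomp : ∀ x : H → ℝ, π (shiftMap (τ g) x) = shiftMap g (π x) := by
      intro x
      funext g'
      show x ((τ g)⁻¹ * τ g') = π x (g⁻¹ * g')
      show x ((τ g)⁻¹ * τ g') = x (τ (g⁻¹ * g'))
      rw [map_mul, map_inv]
    show (π (shiftMap (τ g) p.1), π (shiftMap (τ g) p.2)) = _
    rw [hcomp p.1, hcomp p.2]
    rfl
  have hcommPre : ∀ (g : G) (E : Set ((G → ℝ) × (G → ℝ))),
      T (τ g) ⁻¹' (Q ⁻¹' E) =
        Q ⁻¹' ((fun p : (G → ℝ) × (G → ℝ) => (shiftMap g p.1, shiftMap g p.2)) ⁻¹' E) := by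
    intro g E
    rw [← Set.preimage_comp, hcomm g, Set.preimage_comp]
  -- convergence in measure of coordinates
  have hevalν : ∀ (u : ℕ → H) (h₀ : H), Tendsto u atTop (𝓝 h₀) →
      TendstoInMeasure ν (fun n (x : H → ℝ) => x (u n)) atTop (fun x => x h₀) := by
    intro u h₀ hu
    rw [tendstoInMeasure_iff_dist]
    intro ε hε
    have key : ∀ b : H, ν {x : H → ℝ | ε ≤ dist (x b) (x h₀)}
        = P' {ω | ε ≤ dist (Y b ω) (Y h₀ ω)} := by
      intro b
      rw [hνdef]
      show Measure.map (fun ω h => Y h ω) P' _ = _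
      rw [Measure.map_apply hmeasι
        (measurableSet_le measurable_const ((measurable_pi_apply b).dist (measurable_pi_apply h₀)))]
      rfl
    simp only [key]
    exact (tendstoInMeasure_iff_dist.1 (hcontY h₀) ε hε).comp hu
  have hfstρ : ∀ (u : ℕ → H) (h₀ : H), Tendsto u atTop (𝓝 h₀) →
      TendstoInMeasure ρ (fun n (p : W) => p.1 (u n)) atTop (fun p => p.1 h₀) := by
    intro u h₀ hu
    rw [tendstoInMeasure_iff_dist]
    intro ε hε
    have key : ∀ b : H, ρ {p : W | ε ≤ dist (p.1 b) (p.1 h₀)}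
        = ν {x : H → ℝ | ε ≤ dist (x b) (x h₀)} := by
      intro b
      have hseteq : {p : W | ε ≤ dist (p.1 b) (p.1 h₀)}
          = {x : H → ℝ | ε ≤ dist (x b) (x h₀)} ×ˢ (Set.univ : Set (H → ℝ)) := by
        ext p
        exact ⟨fun hp => ⟨hp, trivial⟩, fun hp => hp.1⟩
      rw [hseteq, hρdef, Measure.prod_prod, measure_univ, mul_one]
    simp only [key]
    exact tendstoInMeasure_iff_dist.1 (hevalν u h₀ hu) ε hε
  have hsndρ : ∀ (u : ℕ → H) (h₀ : H), Tendsto u atTop (𝓝 h₀) →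
      TendstoInMeasure ρ (fun n (p : W) => p.2 (u n)) atTop (fun p => p.2 h₀) := by
    intro u h₀ hu
    rw [tendstoInMeasure_iff_dist]
    intro ε hε
    have key : ∀ b : H, ρ {p : W | ε ≤ dist (p.2 b) (p.2 h₀)}
        = ν {x : H → ℝ | ε ≤ dist (x b) (x h₀)} := by
      intro b
      have hseteq : {p : W | ε ≤ dist (p.2 b) (p.2 h₀)}
          = (Set.univ : Set (H → ℝ)) ×ˢ {x : H → ℝ | ε ≤ dist (x b) (x h₀)} := by
        ext p
        exact ⟨fun hp => ⟨trivial, hp⟩, fun hp => hp.2⟩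
      rw [hseteq, hρdef, Measure.prod_prod, measure_univ, one_mul]
    simp only [key]
    exact tendstoInMeasure_iff_dist.1 (hevalν u h₀ hu) ε hε
  -- generating sets
  set C₀ : Set (Set (H → ℝ)) :=
    ⋃ h : H, (fun B : Set ℝ => (fun x : H → ℝ => x h) ⁻¹' B) '' (⋃ q : ℚ, {Set.Iio (q : ℝ)})
    with hC₀def
  have hgenPi : (inferInstance : MeasurableSpace (H → ℝ)) =
      MeasurableSpace.generateFrom C₀ := by
    have h1 : (inferInstance : MeasurableSpace (H → ℝ))
        = ⨆ h : H, MeasurableSpace.comap (fun x : H → ℝ => x h)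
            (inferInstance : MeasurableSpace ℝ) := rfl
    have h2 : (inferInstance : MeasurableSpace ℝ)
        = MeasurableSpace.generateFrom (⋃ q : ℚ, {Set.Iio (q : ℝ)}) :=
      Real.borel_eq_generateFrom_Iio_rat
    rw [h1]
    simp_rw [h2, MeasurableSpace.comap_generateFrom]
    rw [MeasurableSpace.iSup_generateFrom]
  set CW : Set (Set W) :=
    ((fun A : Set (H → ℝ) => (Prod.fst : W → H → ℝ) ⁻¹' A) '' C₀) ∪
      ((fun A : Set (H → ℝ) => (Prod.snd : W → H → ℝ) ⁻¹' A) '' C₀) with hCWdef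
  have hgenW : (inferInstance : MeasurableSpace W) = MeasurableSpace.generateFrom CW := by
    have h3 : (inferInstance : MeasurableSpace W)
        = MeasurableSpace.comap (Prod.fst : W → H → ℝ) inferInstance
            ⊔ MeasurableSpace.comap (Prod.snd : W → H → ℝ) inferInstance := rfl
    rw [h3, hgenPi, MeasurableSpace.comap_generateFrom, MeasurableSpace.comap_generateFrom,
      MeasurableSpace.generateFrom_sup_generateFrom]
  -- dense sequences
  have hseq : ∀ h₀ : H, ∃ g : ℕ → G, Tendsto (fun n => τ (g n)) atTop (𝓝 h₀) := by
    intro h₀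
    have hcl : h₀ ∈ closure (Set.range ⇑τ) := hdense h₀
    rw [mem_closure_iff_seq_limit] at hcl
    obtain ⟨u, hmem, hlim⟩ := hcl
    choose g hg using hmem
    refine ⟨g, ?_⟩
    have : (fun n => τ (g n)) = u := funext hg
    rw [this]
    exact hlim
  -- base case for goodness
  have hbase : ∀ (k : ℕ → H), Tendsto k atTop (𝓝 1) → ∀ A ∈ CW,
      Tendsto (fun n => ρ ((T (k n) ⁻¹' A) ∆ A)) atTop (𝓝 0) := by
    intro k hk A hA
    rw [hCWdef] at hA
    have hseqlim : ∀ b : H, Tendsto (fun n => (k n)⁻¹ * b) atTop (𝓝 b) := by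
      intro b
      have := (hk.inv).mul (tendsto_const_nhds (x := b))
      simpa using this
    rcases hA with ⟨B, hB, rfl⟩ | ⟨B, hB, rfl⟩
    · rw [hC₀def] at hB
      simp only [Set.mem_iUnion, Set.mem_image, Set.mem_singleton_iff] at hB
      obtain ⟨h, B', ⟨q, rfl⟩, rfl⟩ := hB
      have hZ : Measurable (fun p : W => p.1 h) :=
        (measurable_pi_apply h).comp measurable_fst
      have hTM : TendstoInMeasure ρ (fun n (p : W) => (fun p : W => p.1 h) (T (k n) p))
          atTop (fun p : W => p.1 h) :=
        hfstρ (fun n => (k n)⁻¹ * h) h (hseqlim h)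
      exact good_threshold ρ (fun n => T (k n)) (fun n => hTpre (k n)) hZ hTM q
    · rw [hC₀def] at hB
      simp only [Set.mem_iUnion, Set.mem_image, Set.mem_singleton_iff] at hB
      obtain ⟨h, B', ⟨q, rfl⟩, rfl⟩ := hB
      have hZ : Measurable (fun p : W => p.2 h) :=
        (measurable_pi_apply h).comp measurable_snd
      have hTM : TendstoInMeasure ρ (fun n (p : W) => (fun p : W => p.2 h) (T (k n) p))
          atTop (fun p : W => p.2 h) :=
        hsndρ (fun n => (k n)⁻¹ * h) h (hseqlim h)
      exact good_threshold ρ (fun n => T (k n)) (fun n => hTpre (k n)) hZ hTM q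
  -- invariance extends from τ(G) to H
  have hINV : ∀ (F : Set W), MeasurableSet F →
      (∀ g : G, ρ ((T (τ g) ⁻¹' F) ∆ F) = 0) → ∀ h₀ : H, ρ ((T h₀ ⁻¹' F) ∆ F) = 0 := by
    intro F hF hinv h₀
    obtain ⟨g, hg⟩ := hseq h₀
    set k : ℕ → H := fun n => h₀ * (τ (g n))⁻¹ with hkdef
    have hk1 : Tendsto k atTop (𝓝 1) := by
      have := (tendsto_const_nhds (x := h₀)).mul hg.inv
      simpa using this
    have hgood : Tendsto (fun n => ρ ((T (k n) ⁻¹' F) ∆ F)) atTop (𝓝 0) :=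
      good_of_generateFrom ρ (fun n => T (k n)) (fun n => hTpre (k n)) CW hgenW
        (hbase k hk1) hF
    have hbound : ∀ n, ρ ((T h₀ ⁻¹' F) ∆ F) ≤ ρ ((T (k n) ⁻¹' F) ∆ F) := by
      intro n
      have hTcomp : T h₀ ⁻¹' F = T (τ (g n)) ⁻¹' (T (k n) ⁻¹' F) := by
        have hfun : T h₀ = T (k n) ∘ T (τ (g n)) := by
          funext p
          show T h₀ p = T (k n) (T (τ (g n)) p)
          have h1 : shiftMap (k n) (shiftMap (τ (g n)) p.1) = shiftMap h₀ p.1 := by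
            rw [shiftMap_shiftMap, hkdef]
            simp [inv_mul_cancel_right]
          have h2 : shiftMap (k n) (shiftMap (τ (g n)) p.2) = shiftMap h₀ p.2 := by
            rw [shiftMap_shiftMap, hkdef]
            simp [inv_mul_cancel_right]
          show (shiftMap h₀ p.1, shiftMap h₀ p.2)
            = (shiftMap (k n) (shiftMap (τ (g n)) p.1), shiftMap (k n) (shiftMap (τ (g n)) p.2))
          rw [h1, h2]
        rw [← Set.preimage_comp, ← hfun]
      calc ρ ((T h₀ ⁻¹' F) ∆ F)
          ≤ ρ ((T h₀ ⁻¹' F) ∆ (T (τ (g n)) ⁻¹' F)) + ρ ((T (τ (g n)) ⁻¹' F) ∆ F) :=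
            measure_symmDiff_le _ _ _
        _ = ρ ((T h₀ ⁻¹' F) ∆ (T (τ (g n)) ⁻¹' F)) := by rw [hinv (g n), add_zero]
        _ = ρ (T (τ (g n)) ⁻¹' ((T (k n) ⁻¹' F) ∆ F)) := by
            rw [hTcomp, ← Set.preimage_symmDiff]
        _ = ρ ((T (k n) ⁻¹' F) ∆ F) := by
            exact hTpre (τ (g n)) _ (((hF.preimage (hTm (k n)))).symmDiff hF)
    have hle : ρ ((T h₀ ⁻¹' F) ∆ F) ≤ 0 :=
      ge_of_tendsto hgood (Eventually.of_forall hbound)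
    exact le_antisymm hle zero_le
  -- approximation of ρ-measurable sets by preimages under Q
  have hbaseQ : ∀ A ∈ CW, ∃ E : Set ((G → ℝ) × (G → ℝ)),
      MeasurableSet E ∧ ρ (A ∆ (Q ⁻¹' E)) = 0 := by
    have hν0 : ∀ (h : H) (q : ℝ), ∃ E₀ : Set (G → ℝ), MeasurableSet E₀ ∧
        ν ({x : H → ℝ | x h < q} ∆ (π ⁻¹' E₀)) = 0 := by
      intro h q
      obtain ⟨g, hg⟩ := hseq h
      have hTMν := hevalν (fun n => τ (g n)) h hg
      obtain ⟨ns, hns, hae⟩ := hTMν.exists_seq_tendsto_ae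
      set t : ℕ → G := fun i => g (ns i) with htdef
      set E₀ : Set (G → ℝ) := ⋃ m : ℕ, ⋃ N : ℕ, ⋂ i, ⋂ (_ : N ≤ i),
        {y : G → ℝ | y (t i) ≤ q - 1 / (m + 1)} with hE₀def
      have hE₀m : MeasurableSet E₀ := by
        refine MeasurableSet.iUnion fun m => MeasurableSet.iUnion fun N =>
          MeasurableSet.iInter fun i => MeasurableSet.iInter fun _ =>
            measurableSet_le (measurable_pi_apply _) measurable_const
      refine ⟨E₀, hE₀m, ?_⟩
      have hsub : {x : H → ℝ | x h < q} ∆ (π ⁻¹' E₀) ⊆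
          {x : H → ℝ | ¬ Tendsto (fun i => x (τ (t i))) atTop (𝓝 (x h))} := by
        intro x hx
        intro hconv
        have hiff : x h < q ↔ π x ∈ E₀ := by
          constructor
          · intro hxh
            obtain ⟨m, hm⟩ := exists_nat_one_div_lt (sub_pos.2 hxh)
            have hq' : x h < q - 1 / (m + 1) := by linarith
            have hev : ∀ᶠ i in atTop, x (τ (t i)) < q - 1 / (m + 1) :=
              hconv.eventually_lt_const hq'
            obtain ⟨N, hN⟩ := eventually_atTop.1 hev
            refine Set.mem_iUnion.2 ⟨m, Set.mem_iUnion.2 ⟨N, ?_⟩⟩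
            refine Set.mem_iInter.2 fun i => Set.mem_iInter.2 fun hi => ?_
            exact le_of_lt (hN i hi)
          · intro hmem
            obtain ⟨m, hm⟩ := Set.mem_iUnion.1 hmem
            obtain ⟨N, hN⟩ := Set.mem_iUnion.1 hm
            have hle : x h ≤ q - 1 / (m + 1) := by
              refine le_of_tendsto hconv (eventually_atTop.2 ⟨N, fun i hi => ?_⟩)
              have := Set.mem_iInter.1 (Set.mem_iInter.1 hN i) hi
              exact this
            have : (0 : ℝ) < 1 / (m + 1) := by positivity
            linarith
        rcases hx with ⟨⟨h1, h2⟩⟩ | ⟨h1, h2⟩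
        · exact h2 (hiff.1 h1)
        · exact h2 (hiff.2 h1)
      exact measure_mono_null hsub (ae_iff.1 hae)
    intro A hA
    rw [hCWdef] at hA
    rcases hA with ⟨B, hB, rfl⟩ | ⟨B, hB, rfl⟩
    · rw [hC₀def] at hB
      simp only [Set.mem_iUnion, Set.mem_image, Set.mem_singleton_iff] at hB
      obtain ⟨h, B', ⟨q, rfl⟩, rfl⟩ := hB
      obtain ⟨E₀, hE₀, h0⟩ := hν0 h q
      refine ⟨(Prod.fst : (G → ℝ) × (G → ℝ) → G → ℝ) ⁻¹' E₀, hE₀.preimage measurable_fst, ?_⟩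
      have heq : ((Prod.fst : W → H → ℝ) ⁻¹' ((fun x : H → ℝ => x h) ⁻¹' Set.Iio (q : ℝ)))
          ∆ (Q ⁻¹' ((Prod.fst : (G → ℝ) × (G → ℝ) → G → ℝ) ⁻¹' E₀))
          = (Prod.fst : W → H → ℝ) ⁻¹' ({x : H → ℝ | x h < q} ∆ (π ⁻¹' E₀)) := by
        rw [Set.preimage_symmDiff]
        rfl
      rw [heq]
      have hsup : (Prod.fst : W → H → ℝ) ⁻¹' ({x : H → ℝ | x h < q} ∆ (π ⁻¹' E₀)) ⊆
          (Prod.fst : W → H → ℝ) ⁻¹' (toMeasurable ν ({x : H → ℝ | x h < q} ∆ (π ⁻¹' E₀))) :=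
        Set.preimage_mono (subset_toMeasurable _ _)
      refine measure_mono_null hsup ?_
      rw [← Set.prod_univ, hρdef, Measure.prod_prod, measure_toMeasurable, h0, zero_mul]
    · rw [hC₀def] at hB
      simp only [Set.mem_iUnion, Set.mem_image, Set.mem_singleton_iff] at hB
      obtain ⟨h, B', ⟨q, rfl⟩, rfl⟩ := hB
      obtain ⟨E₀, hE₀, h0⟩ := hν0 h q
      refine ⟨(Prod.snd : (G → ℝ) × (G → ℝ) → G → ℝ) ⁻¹' E₀, hE₀.preimage measurable_snd, ?_⟩
      have heq : ((Prod.snd : W → H → ℝ) ⁻¹' ((fun x : H → ℝ => x h) ⁻¹' Set.Iio (q : ℝ)))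
          ∆ (Q ⁻¹' ((Prod.snd : (G → ℝ) × (G → ℝ) → G → ℝ) ⁻¹' E₀))
          = (Prod.snd : W → H → ℝ) ⁻¹' ({x : H → ℝ | x h < q} ∆ (π ⁻¹' E₀)) := by
        rw [Set.preimage_symmDiff]
        rfl
      rw [heq]
      have hsup : (Prod.snd : W → H → ℝ) ⁻¹' ({x : H → ℝ | x h < q} ∆ (π ⁻¹' E₀)) ⊆
          (Prod.snd : W → H → ℝ) ⁻¹' (toMeasurable ν ({x : H → ℝ | x h < q} ∆ (π ⁻¹' E₀))) :=
        Set.preimage_mono (subset_toMeasurable _ _)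
      refine measure_mono_null hsup ?_
      rw [← Set.univ_prod, hρdef, Measure.prod_prod, measure_toMeasurable, h0, mul_zero]
  -- main equivalence
  constructor
  · -- X weakly mixing → Y weakly mixing
    intro hX
    intro F hF hinvF
    obtain ⟨E, hE, h0⟩ := exists_approx_of_generateFrom ρ Q CW hgenW hbaseQ hF
    have hinvE : ∀ g : G,
        σm (((fun p : (G → ℝ) × (G → ℝ) => (shiftMap g p.1, shiftMap g p.2)) ⁻¹' E) ∆ E)
          = 0 := by
      intro g
      have hSm : Measurable (fun p : (G → ℝ) × (G → ℝ) => (shiftMap g p.1, shiftMap g p.2)) :=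
        ((hshiftmG g).comp measurable_fst).prodMk ((hshiftmG g).comp measurable_snd)
      have hEm' : MeasurableSet
          (((fun p : (G → ℝ) × (G → ℝ) => (shiftMap g p.1, shiftMap g p.2)) ⁻¹' E) ∆ E) :=
        (hE.preimage hSm).symmDiff hE
      rw [← hQpre _ hEm', Set.preimage_symmDiff, ← hcommPre g E]
      have hb : ρ ((T (τ g) ⁻¹' (Q ⁻¹' E)) ∆ (Q ⁻¹' E)) ≤
          ρ ((T (τ g) ⁻¹' (Q ⁻¹' E)) ∆ (T (τ g) ⁻¹' F)) + ρ ((T (τ g) ⁻¹' F) ∆ F)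
            + ρ (F ∆ (Q ⁻¹' E)) := by
        calc ρ ((T (τ g) ⁻¹' (Q ⁻¹' E)) ∆ (Q ⁻¹' E))
            ≤ ρ ((T (τ g) ⁻¹' (Q ⁻¹' E)) ∆ F) + ρ (F ∆ (Q ⁻¹' E)) := measure_symmDiff_le _ _ _
          _ ≤ (ρ ((T (τ g) ⁻¹' (Q ⁻¹' E)) ∆ (T (τ g) ⁻¹' F)) + ρ ((T (τ g) ⁻¹' F) ∆ F))
              + ρ (F ∆ (Q ⁻¹' E)) := by
              gcongr
              exact measure_symmDiff_le _ _ _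
      have h1 : ρ ((T (τ g) ⁻¹' (Q ⁻¹' E)) ∆ (T (τ g) ⁻¹' F)) = 0 := by
        rw [← Set.preimage_symmDiff, hTpre (τ g) _ (((hE.preimage hQm)).symmDiff hF),
          symmDiff_comm]
        exact h0
      have h2 : ρ ((T (τ g) ⁻¹' F) ∆ F) = 0 := hinvF (τ g)
      rw [h1, h2, h0, add_zero, add_zero] at hb
      exact le_antisymm hb zero_le
    have hres := hX E hE hinvE
    have hFE : ρ F = σm E := by
      have hae : F =ᵐ[ρ] (Q ⁻¹' E) := by
        rw [ae_eq_set]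
        constructor
        · refine measure_mono_null ?_ h0
          intro x hx
          rw [Set.mem_symmDiff]
          exact Or.inl ⟨hx.1, hx.2⟩
        · refine measure_mono_null ?_ h0
          intro x hx
          rw [Set.mem_symmDiff]
          exact Or.inr ⟨hx.1, hx.2⟩
      rw [measure_congr hae, hQpre E hE]
    rw [← hFE] at hres
    exact hres
  · -- Y weakly mixing → X weakly mixing
    intro hY
    intro E hE hinvE
    have hF : MeasurableSet (Q ⁻¹' E) := hE.preimage hQm
    have hinvτ : ∀ g : G, ρ ((T (τ g) ⁻¹' (Q ⁻¹' E)) ∆ (Q ⁻¹' E)) = 0 := by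
      intro g
      have hSm : Measurable (fun p : (G → ℝ) × (G → ℝ) => (shiftMap g p.1, shiftMap g p.2)) :=
        ((hshiftmG g).comp measurable_fst).prodMk ((hshiftmG g).comp measurable_snd)
      rw [hcommPre g E, ← Set.preimage_symmDiff,
        hQpre _ ((hE.preimage hSm).symmDiff hE)]
      exact hinvE g
    have hinvF : ∀ h : H, ρ ((T h ⁻¹' (Q ⁻¹' E)) ∆ (Q ⁻¹' E)) = 0 :=
      hINV (Q ⁻¹' E) hF hinvτ
    have hres := hY (Q ⁻¹' E) hF hinvF
    rwa [hQpre E hE] at hres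


end Paper
end
end

section
/- Let Γ be a Polish group, G ≤ Γ a dense subgroup, and X = (X_γ)_{γ∈Γ} a stochastically continuous stationary Γ-process. Then X is Γ-ergodic if and only if the restricted stationary G-process X|_G = (X_g)_{g∈G} is G-ergodic. -/
open MeasureTheory ProbabilityTheory Filter Topology symmDiff

noncomputable section

namespace Paper

variable {G : Type*} {Ω : Type*}

open scoped ENNReal NNReal BoundedContinuousFunction

section AuxLemmas

variable {Γ : Type*} [Group Γ] {Ω : Type*} [MeasurableSpace Ω]

lemma measurable_shiftMap_s6 (g : Γ) : Measurable (shiftMap g : (Γ → ℝ) → Γ → ℝ) :=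
  measurable_pi_lambda _ fun _ => measurable_pi_apply _

lemma shiftMap_comp_apply (a b : Γ) (x : Γ → ℝ) :
    shiftMap a (shiftMap b x) = shiftMap (a * b) x := by
  funext h
  simp [shiftMap, mul_inv_rev, mul_assoc]

lemma procLaw_map_shiftMap (P : Measure Ω) (X : Γ → Ω → ℝ) (hmeas : ∀ γ, Measurable (X γ))
    (hstat : Stationary P X) (g : Γ) :
    (procLaw P X).map (shiftMap g) = procLaw P X := by
  have hXm : Measurable (fun ω (γ : Γ) => X γ ω) := measurable_pi_lambda _ hmeas
  rw [procLaw, Measure.map_map (measurable_shiftMap_s6 g) hXm]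
  exact hstat g⁻¹

lemma procLaw_shift_apply (P : Measure Ω) (X : Γ → Ω → ℝ) (hmeas : ∀ γ, Measurable (X γ))
    (hstat : Stationary P X) (g : Γ) {A : Set (Γ → ℝ)} (hA : MeasurableSet A) :
    procLaw P X (shiftMap g ⁻¹' A) = procLaw P X A := by
  conv_rhs => rw [← procLaw_map_shiftMap P X hmeas hstat g]
  rw [Measure.map_apply (measurable_shiftMap_s6 g) hA]

lemma tendstoInMeasure_pi {Ω : Type*} [MeasurableSpace Ω] {P : Measure Ω}
    {κ : Type*} [Fintype κ] {Yn : ℕ → Ω → κ → ℝ} {Y : Ω → κ → ℝ}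
    (h : ∀ i, TendstoInMeasure P (fun n ω => Yn n ω i) atTop (fun ω => Y ω i)) :
    TendstoInMeasure P Yn atTop Y := by
  intro ε hε
  have hle : ∀ n, P {ω | ε ≤ edist (Yn n ω) (Y ω)}
      ≤ ∑ i : κ, P {ω | ε ≤ edist (Yn n ω i) (Y ω i)} := by
    intro n
    have hsub : {ω | ε ≤ edist (Yn n ω) (Y ω)} ⊆ ⋃ i : κ, {ω | ε ≤ edist (Yn n ω i) (Y ω i)} := by
      intro ω hω
      by_contra hc
      simp only [Set.mem_iUnion, Set.mem_setOf_eq, not_exists, not_le] at hc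
      exact absurd hω (not_le.2 (show edist (Yn n ω) (Y ω) < ε by rw [edist_pi_def]; exact (Finset.sup_lt_iff hε).2 fun i _ => hc i))
    exact (measure_mono hsub).trans ((measure_iUnion_le _).trans (by rw [tsum_fintype]))
  have hsum : Tendsto (fun n => ∑ i : κ, P {ω | ε ≤ edist (Yn n ω i) (Y ω i)}) atTop (𝓝 0) := by
    have := tendsto_finset_sum (Finset.univ : Finset κ) (fun i _ => h i ε hε)
    simpa using this
  exact tendsto_of_tendsto_of_tendsto_of_le_of_le tendsto_const_nhds hsum
    (fun n => zero_le) hle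

lemma tendsto_lintegral_bcf {Ω : Type*} [MeasurableSpace Ω] (P : Measure Ω)
    [IsProbabilityMeasure P] {κ : Type*} [Fintype κ]
    (f : BoundedContinuousFunction (κ → ℝ) ℝ)
    {Yn : ℕ → Ω → κ → ℝ} {Y : Ω → κ → ℝ}
    (hYn : ∀ n, Measurable (Yn n)) (hY : Measurable Y)
    (h : TendstoInMeasure P Yn atTop Y) :
    Tendsto (fun n => ∫⁻ ω, (‖f (Yn n ω) - f (Y ω)‖₊ : ℝ≥0∞) ∂P) atTop (𝓝 0) := by
  apply tendsto_of_subseq_tendsto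
  intro ns hns
  have h' : TendstoInMeasure P (fun k => Yn (ns k)) atTop Y := fun ε hε => (h ε hε).comp hns
  obtain ⟨ms, -, hae⟩ := h'.exists_seq_tendsto_ae
  refine ⟨ms, ?_⟩
  have h0 : (0 : ℝ≥0∞) = ∫⁻ _, (0 : ℝ≥0∞) ∂P := by simp
  rw [h0]
  apply tendsto_lintegral_of_dominated_convergence (bound := fun _ => ((2 : ℝ≥0∞) * ‖f‖₊))
  · intro n
    exact ((f.continuous.measurable.comp (hYn _)).sub (f.continuous.measurable.comp hY)).nnnorm.coe_nnreal_ennreal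
  · intro n
    refine Eventually.of_forall fun ω => ?_
    have h1 : ‖f (Yn (ns (ms n)) ω) - f (Y ω)‖₊ ≤ 2 * ‖f‖₊ := by
      refine (nnnorm_sub_le _ _).trans ?_
      rw [two_mul]
      exact add_le_add (f.nnnorm_coe_le_nnnorm _) (f.nnnorm_coe_le_nnnorm _)
    simp only []
    exact_mod_cast h1
  · simp only [lintegral_const, measure_univ, mul_one]
    exact ENNReal.mul_ne_top (by simp) ENNReal.coe_ne_top
  · filter_upwards [hae] with ω hω
    have h2 : Tendsto (fun k => f (Yn (ns (ms k)) ω) - f (Y ω)) atTop (𝓝 0) := by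
      have := ((f.continuous.tendsto (Y ω)).comp hω).sub
        (tendsto_const_nhds (x := f (Y ω)))
      simpa using this
    have h3 : Tendsto (fun k => (‖f (Yn (ns (ms k)) ω) - f (Y ω)‖₊ : ℝ≥0)) atTop (𝓝 0) := by
      simpa using h2.nnnorm
    rw [show ((0:ℝ≥0∞)) = ((0:ℝ≥0) : ℝ≥0∞) from rfl]
    exact ENNReal.tendsto_coe.2 h3

end AuxLemmas

section Repr

variable {Γ : Type*} [Group Γ] [TopologicalSpace Γ] [IsTopologicalGroup Γ] [PolishSpace Γ]

lemma exists_repr (G : Subgroup Γ) (hG : Dense (G : Set Γ))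
    {Ω : Type*} [MeasurableSpace Ω] (P : Measure Ω) [IsProbabilityMeasure P]
    (X : Γ → Ω → ℝ) (hmeas : ∀ γ, Measurable (X γ)) (hcont : StochasticallyContinuous P X)
    (γ : Γ) :
    ∃ h : (↥G → ℝ) → ℝ, Measurable h ∧
      ∀ᵐ ω ∂P, X γ ω = h (fun g : G => X ↑g ω) := by
  letI := TopologicalSpace.upgradeIsCompletelyMetrizable Γ
  obtain ⟨u, hu_mem, hu_tendsto⟩ := mem_closure_iff_seq_limit.1 (hG γ)
  have htim : TendstoInMeasure P (fun n => X (u n)) atTop (X γ) :=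
    fun ε hε => (hcont γ ε hε).comp hu_tendsto
  obtain ⟨ns, -, hae⟩ := htim.exists_seq_tendsto_ae
  set v : ℕ → G := fun n => ⟨u (ns n), hu_mem (ns n)⟩ with hv
  set Ymap : Ω → (↥G → ℝ) := fun ω g => X (↑g) ω with hYmap
  have hYm : Measurable Ymap := measurable_pi_lambda _ fun g => hmeas _
  have hfm : ∀ n, Measurable (fun y : ↥G → ℝ => y (v n)) :=
    fun n => measurable_pi_apply _
  have hconvset : MeasurableSet
      {y : ↥G → ℝ | ∃ l : ℝ, Tendsto (fun n => y (v n)) atTop (𝓝 l)} :=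
    measurableSet_exists_tendsto hfm
  have haeν : ∀ᵐ y ∂(P.map Ymap), ∃ l : ℝ, Tendsto (fun n => y (v n)) atTop (𝓝 l) := by
    rw [MeasureTheory.ae_map_iff hYm.aemeasurable hconvset]
    filter_upwards [hae] with ω hω
    exact ⟨X γ ω, hω⟩
  obtain ⟨h, hhm, hh⟩ := measurable_limit_of_tendsto_metrizable_ae
    (μ := P.map Ymap) (fun n => (hfm n).aemeasurable) haeν
  refine ⟨h, hhm, ?_⟩
  have hh' : ∀ᵐ ω ∂P, Tendsto (fun n => Ymap ω (v n)) atTop (𝓝 (h (Ymap ω))) :=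
    ae_of_ae_map hYm.aemeasurable hh
  filter_upwards [hae, hh'] with ω h1 h2
  exact tendsto_nhds_unique h1 h2

end Repr

section Repr2

variable {Γ : Type*} [Group Γ] [TopologicalSpace Γ] [IsTopologicalGroup Γ] [PolishSpace Γ]

lemma exists_restr_set (G : Subgroup Γ) (hG : Dense (G : Set Γ))
    {Ω : Type*} [MeasurableSpace Ω] (P : Measure Ω) [IsProbabilityMeasure P]
    (X : Γ → Ω → ℝ) (hmeas : ∀ γ, Measurable (X γ)) (hcont : StochasticallyContinuous P X)
    {E : Set (Γ → ℝ)} (hE : MeasurableSet E) :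
    ∃ F : Set (↥G → ℝ), MeasurableSet F ∧
      procLaw P X (E ∆ ((fun (x : Γ → ℝ) (g : ↥G) => x ↑g) ⁻¹' F)) = 0 := by
  classical
  set res : (Γ → ℝ) → ↥G → ℝ := fun x g => x ↑g with hres
  have hresm : Measurable res := measurable_pi_lambda _ fun _ => measurable_pi_apply _
  have hXm : Measurable (fun ω (γ : Γ) => X γ ω) := measurable_pi_lambda _ hmeas
  set C : Set (Set (Γ → ℝ)) :=
    {A | ∃ (γ : Γ) (B : Set ℝ), MeasurableSet B ∧ A = (fun x : Γ → ℝ => x γ) ⁻¹' B} with hC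
  have hle : (MeasurableSpace.pi : MeasurableSpace (Γ → ℝ)) ≤ .generateFrom C := by
    refine iSup_le fun γ => ?_
    rw [MeasurableSpace.comap_le_iff_le_map]
    intro B hB
    exact MeasurableSpace.measurableSet_generateFrom ⟨γ, B, hB, rfl⟩
  have key : MeasurableSet E ∧ ∃ F : Set (↥G → ℝ), MeasurableSet F ∧
      procLaw P X (E ∆ (res ⁻¹' F)) = 0 := by
    have hEg := hle E hE
    clear hE
    induction E, hEg using MeasurableSpace.generateFrom_induction with
    | hC t t_mem _ =>
      obtain ⟨γ, B, hB, rfl⟩ := t_mem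
      obtain ⟨h, hhm, hrep⟩ := exists_repr G hG P X hmeas hcont γ
      refine ⟨(measurable_pi_apply γ) hB, h ⁻¹' B, hhm hB, ?_⟩
      have hsub : ((fun x : Γ → ℝ => x γ) ⁻¹' B) ∆ (res ⁻¹' (h ⁻¹' B)) ⊆
          {x : Γ → ℝ | ¬ (x γ = h (res x))} := by
        intro x hx
        rcases Set.mem_symmDiff.1 hx with ⟨h1, h2⟩ | ⟨h1, h2⟩
        · intro heq
          simp only [Set.mem_preimage] at h1 h2
          rw [heq] at h1; exact h2 h1
        · intro heq
          simp only [Set.mem_preimage] at h1 h2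
          rw [← heq] at h1; exact h2 h1
      refine measure_mono_null hsub ?_
      have hms : MeasurableSet {x : Γ → ℝ | x γ = h (res x)} :=
        measurableSet_eq_fun (measurable_pi_apply γ) (hhm.comp hresm)
      rw [procLaw, Measure.map_apply hXm
        (show MeasurableSet {x : Γ → ℝ | ¬ (x γ = h (res x))} from hms.compl)]
      have : (fun ω (γ' : Γ) => X γ' ω) ⁻¹' {x : Γ → ℝ | ¬ (x γ = h (res x))}
          = {ω | ¬ (X γ ω = h (fun g : ↥G => X ↑g ω))} := rfl
      rw [this]
      exact ae_iff.1 hrep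
    | empty =>
      exact ⟨MeasurableSet.empty, ∅, MeasurableSet.empty, by simp⟩
    | compl t _ ht =>
      obtain ⟨htm, F, hFm, h0⟩ := ht
      refine ⟨htm.compl, Fᶜ, hFm.compl, ?_⟩
      rwa [Set.preimage_compl, compl_symmDiff_compl]
    | iUnion f hfgen hf =>
      choose hfm F hFm h0 using hf
      refine ⟨MeasurableSet.iUnion hfm, ⋃ n, F n, MeasurableSet.iUnion hFm, ?_⟩
      have hsub : (⋃ n, f n) ∆ (res ⁻¹' ⋃ n, F n) ⊆ ⋃ n, (f n ∆ (res ⁻¹' F n)) := by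
        rw [Set.preimage_iUnion]
        intro x hx
        rcases Set.mem_symmDiff.1 hx with ⟨h1, h2⟩ | ⟨h1, h2⟩
        · obtain ⟨n, hn⟩ := Set.mem_iUnion.1 h1
          exact Set.mem_iUnion.2 ⟨n, Set.mem_symmDiff.2 (Or.inl ⟨hn,
            fun hmem => h2 (Set.mem_iUnion.2 ⟨n, hmem⟩)⟩)⟩
        · obtain ⟨n, hn⟩ := Set.mem_iUnion.1 h1
          exact Set.mem_iUnion.2 ⟨n, Set.mem_symmDiff.2 (Or.inr ⟨hn,
            fun hmem => h2 (Set.mem_iUnion.2 ⟨n, hmem⟩)⟩)⟩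
      refine measure_mono_null hsub (measure_iUnion_null h0)
  exact key.2

end Repr2

section KeyContinuity

variable {Γ : Type*} [Group Γ] [TopologicalSpace Γ] [IsTopologicalGroup Γ]

lemma tendsto_measure_shift_symmDiff
    {Ω : Type*} [MeasurableSpace Ω] (P : Measure Ω) [IsProbabilityMeasure P]
    (X : Γ → Ω → ℝ) (hmeas : ∀ γ, Measurable (X γ)) (hstat : Stationary P X)
    (hcont : StochasticallyContinuous P X)
    {S : Set (Γ → ℝ)} (hS : MeasurableSet S)
    {δ : ℕ → Γ} (hδ : Tendsto δ atTop (𝓝 1)) :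
    Tendsto (fun n => procLaw P X ((shiftMap (δ n) ⁻¹' S) ∆ S)) atTop (𝓝 0) := by
  classical
  have hXm : Measurable (fun ω (γ : Γ) => X γ ω) := measurable_pi_lambda _ hmeas
  have hprob : IsProbabilityMeasure (procLaw P X) :=
    Measure.isProbabilityMeasure_map hXm.aemeasurable
  rw [ENNReal.tendsto_nhds_zero]
  intro ε hε
  set η : ℝ≥0∞ := min ε 1 with hηdef
  have hη0 : η ≠ 0 := (lt_min hε zero_lt_one).ne'
  have hηtop : η ≠ ∞ := ((min_le_right ε 1).trans_lt ENNReal.one_lt_top).ne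
  have hηε : η ≤ ε := min_le_left _ _
  have h8 : (η / 8 : ℝ≥0∞) ≠ 0 := by
    simp [ENNReal.div_eq_zero_iff, hη0]
  have h8top : (η / 8 : ℝ≥0∞) ≠ ∞ := (ENNReal.div_lt_top hηtop (by norm_num)).ne
  set r : ℝ := (η / 8).toReal with hrdef
  have hr0 : 0 < r := ENNReal.toReal_pos h8 h8top
  have hofr : ENNReal.ofReal r = η / 8 := ENNReal.ofReal_toReal h8top
  -- approximate S by a measurable cylinder
  have halg : IsSetAlgebra (measurableCylinders fun _ : Γ => ℝ) :=
    ⟨empty_mem_measurableCylinders _, fun _ hs => compl_mem_measurableCylinders hs,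
      fun _ _ hs ht => union_mem_measurableCylinders hs ht⟩
  have hdense := Measure.MeasureDense.of_generateFrom_isSetAlgebra_finite
    (μ := procLaw P X) halg generateFrom_measurableCylinders.symm
  obtain ⟨D, hDmem, hSD⟩ := hdense.approx S hS (measure_ne_top _ S) r hr0
  rw [hofr] at hSD
  obtain ⟨s, B, hB, hDeq⟩ := (mem_measurableCylinders D).1 hDmem
  subst hDeq
  set res : (Γ → ℝ) → (↥s → ℝ) := fun x i => x ↑i with hresdef
  have hresm : Measurable res := measurable_pi_lambda _ fun _ => measurable_pi_apply _
  have hcyl : cylinder s B = res ⁻¹' B := rfl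
  rw [hcyl] at hSD
  -- approximate the indicator of B by a bounded continuous function
  set κ : Measure (↥s → ℝ) := (procLaw P X).map res with hκdef
  have hκprob : IsProbabilityMeasure κ := Measure.isProbabilityMeasure_map hresm.aemeasurable
  set g₀ : (↥s → ℝ) → ℝ := B.indicator (fun _ => (1 : ℝ)) with hg₀def
  have hg₀m : Measurable g₀ := measurable_const.indicator hB
  have hg₀mem : MemLp g₀ 1 κ := MemLp.indicator hB (memLp_const (1 : ℝ))
  obtain ⟨f, hf, -⟩ := hg₀mem.exists_boundedContinuous_eLpNorm_sub_le ENNReal.one_ne_top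
    (ε := η / 8) h8
  rw [eLpNorm_one_eq_lintegral_enorm] at hf
  have hfint : ∫⁻ x, (‖g₀ x - f x‖₊ : ℝ≥0∞) ∂κ ≤ η / 8 := by
    refine le_trans (le_of_eq ?_) hf
    congr 1
  -- the coordinate processes
  set Y : Ω → ↥s → ℝ := fun ω i => X (↑i) ω with hYdef
  set Yn : ℕ → Ω → ↥s → ℝ := fun n ω i => X ((δ n)⁻¹ * ↑i) ω with hYndef
  have hYm : Measurable Y := measurable_pi_lambda _ fun i => hmeas _
  have hYnm : ∀ n, Measurable (Yn n) := fun n => measurable_pi_lambda _ fun i => hmeas _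
  have hvec : TendstoInMeasure P Yn atTop Y := by
    refine tendstoInMeasure_pi fun i => ?_
    intro ε' hε'
    have hti : Tendsto (fun n => (δ n)⁻¹ * (↑i : Γ)) atTop (𝓝 ↑i) := by
      have := hδ.inv.mul_const (↑i : Γ)
      simpa using this
    exact (hcont (↑i : Γ) ε' hε').comp hti
  have hTn : Tendsto (fun n => ∫⁻ ω, (‖f (Yn n ω) - f (Y ω)‖₊ : ℝ≥0∞) ∂P) atTop (𝓝 0) :=
    tendsto_lintegral_bcf P f hYnm hYm hvec
  have hev : ∀ᶠ n in atTop, (∫⁻ ω, (‖f (Yn n ω) - f (Y ω)‖₊ : ℝ≥0∞) ∂P) < η / 8 :=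
    hTn.eventually_lt_const (pos_iff_ne_zero.2 h8)
  -- laws of the coordinate processes
  have hPY : P.map Y = κ := by
    rw [hκdef, procLaw, Measure.map_map hresm hXm]
    rfl
  have hPYn : ∀ n, P.map (Yn n) = κ := by
    intro n
    have h1 : P.map (Yn n) = ((P.map (fun ω (γ : Γ) => X γ ω)).map (shiftMap (δ n))).map res := by
      rw [Measure.map_map hresm (measurable_shiftMap_s6 _),
        Measure.map_map (hresm.comp (measurable_shiftMap_s6 _)) hXm]
      rfl
    rw [h1, show (P.map (fun ω (γ : Γ) => X γ ω)) = procLaw P X from rfl,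
      procLaw_map_shiftMap P X hmeas hstat]
  filter_upwards [hev] with n hn
  -- middle term estimate
  have hBδm : MeasurableSet (shiftMap (δ n) ⁻¹' (res ⁻¹' B)) :=
    measurable_shiftMap_s6 _ (hresm hB)
  have hAm : MeasurableSet (res ⁻¹' B) := hresm hB
  have hmid : procLaw P X ((shiftMap (δ n) ⁻¹' (res ⁻¹' B)) ∆ (res ⁻¹' B))
      ≤ η / 8 + (∫⁻ ω, (‖f (Yn n ω) - f (Y ω)‖₊ : ℝ≥0∞) ∂P) + η / 8 := by
    have e1 : procLaw P X ((shiftMap (δ n) ⁻¹' (res ⁻¹' B)) ∆ (res ⁻¹' B))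
        = P ((Yn n ⁻¹' B) ∆ (Y ⁻¹' B)) := by
      rw [procLaw, Measure.map_apply hXm (hBδm.symmDiff hAm)]
      congr 1
    have e2 : P ((Yn n ⁻¹' B) ∆ (Y ⁻¹' B))
        = ∫⁻ ω, (‖g₀ (Yn n ω) - g₀ (Y ω)‖₊ : ℝ≥0∞) ∂P := by
      rw [← lintegral_indicator_one (((hYnm n) hB).symmDiff (hYm hB))]
      refine lintegral_congr fun ω => ?_
      by_cases h1 : Yn n ω ∈ B <;> by_cases h2 : Y ω ∈ B <;>
        simp [hg₀def, Set.indicator_apply, Set.mem_symmDiff, h1, h2]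
    have e3 : ∫⁻ ω, (‖g₀ (Yn n ω) - g₀ (Y ω)‖₊ : ℝ≥0∞) ∂P
        ≤ ∫⁻ ω, ((‖g₀ (Yn n ω) - f (Yn n ω)‖₊ : ℝ≥0∞)
            + (‖f (Yn n ω) - f (Y ω)‖₊ : ℝ≥0∞) + (‖f (Y ω) - g₀ (Y ω)‖₊ : ℝ≥0∞)) ∂P := by
      refine lintegral_mono fun ω => ?_
      have t1 : ‖g₀ (Yn n ω) - g₀ (Y ω)‖₊
          ≤ ‖g₀ (Yn n ω) - f (Yn n ω)‖₊ + ‖f (Yn n ω) - f (Y ω)‖₊ + ‖f (Y ω) - g₀ (Y ω)‖₊ := by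
        have heq : g₀ (Yn n ω) - g₀ (Y ω)
            = (g₀ (Yn n ω) - f (Yn n ω)) + (f (Yn n ω) - f (Y ω)) + (f (Y ω) - g₀ (Y ω)) := by
          ring
        rw [heq]
        exact le_trans (nnnorm_add_le _ _) (add_le_add_left (nnnorm_add_le _ _) _)
      calc (‖g₀ (Yn n ω) - g₀ (Y ω)‖₊ : ℝ≥0∞)
          ≤ ((‖g₀ (Yn n ω) - f (Yn n ω)‖₊ + ‖f (Yn n ω) - f (Y ω)‖₊
              + ‖f (Y ω) - g₀ (Y ω)‖₊ : ℝ≥0) : ℝ≥0∞) := ENNReal.coe_le_coe.2 t1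
        _ = _ := by push_cast; ring
    have hm1 : Measurable fun ω => (‖g₀ (Yn n ω) - f (Yn n ω)‖₊ : ℝ≥0∞) :=
      ((hg₀m.comp (hYnm n)).sub (f.continuous.measurable.comp (hYnm n))).nnnorm.coe_nnreal_ennreal
    have hm2 : Measurable fun ω => (‖f (Yn n ω) - f (Y ω)‖₊ : ℝ≥0∞) :=
      ((f.continuous.measurable.comp (hYnm n)).sub (f.continuous.measurable.comp hYm)).nnnorm.coe_nnreal_ennreal
    have hm3 : Measurable fun ω => (‖f (Y ω) - g₀ (Y ω)‖₊ : ℝ≥0∞) :=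
      ((f.continuous.measurable.comp hYm).sub (hg₀m.comp hYm)).nnnorm.coe_nnreal_ennreal
    have e4 : ∫⁻ ω, ((‖g₀ (Yn n ω) - f (Yn n ω)‖₊ : ℝ≥0∞)
          + (‖f (Yn n ω) - f (Y ω)‖₊ : ℝ≥0∞) + (‖f (Y ω) - g₀ (Y ω)‖₊ : ℝ≥0∞)) ∂P
        = (∫⁻ ω, (‖g₀ (Yn n ω) - f (Yn n ω)‖₊ : ℝ≥0∞) ∂P)
          + (∫⁻ ω, (‖f (Yn n ω) - f (Y ω)‖₊ : ℝ≥0∞) ∂P)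
          + (∫⁻ ω, (‖f (Y ω) - g₀ (Y ω)‖₊ : ℝ≥0∞) ∂P) := by
      rw [lintegral_add_right _ hm3, lintegral_add_right _ hm2]
    have e5 : ∫⁻ ω, (‖g₀ (Yn n ω) - f (Yn n ω)‖₊ : ℝ≥0∞) ∂P ≤ η / 8 := by
      have : ∫⁻ ω, (‖g₀ (Yn n ω) - f (Yn n ω)‖₊ : ℝ≥0∞) ∂P
          = ∫⁻ x, (‖g₀ x - f x‖₊ : ℝ≥0∞) ∂κ := by
        rw [← hPYn n, lintegral_map (show Measurable fun x => (‖g₀ x - f x‖₊ : ℝ≥0∞) from (hg₀m.sub f.continuous.measurable).nnnorm.coe_nnreal_ennreal) (hYnm n)]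
      rw [this]; exact hfint
    have e6 : ∫⁻ ω, (‖f (Y ω) - g₀ (Y ω)‖₊ : ℝ≥0∞) ∂P ≤ η / 8 := by
      have : ∫⁻ ω, (‖f (Y ω) - g₀ (Y ω)‖₊ : ℝ≥0∞) ∂P
          = ∫⁻ x, (‖f x - g₀ x‖₊ : ℝ≥0∞) ∂κ := by
        rw [← hPY, lintegral_map (show Measurable fun x => (‖f x - g₀ x‖₊ : ℝ≥0∞) from (f.continuous.measurable.sub hg₀m).nnnorm.coe_nnreal_ennreal) hYm]
      rw [this]
      refine le_trans (le_of_eq ?_) hfint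
      refine lintegral_congr fun x => ?_
      rw [← neg_sub, nnnorm_neg]
    calc procLaw P X ((shiftMap (δ n) ⁻¹' (res ⁻¹' B)) ∆ (res ⁻¹' B))
        = ∫⁻ ω, (‖g₀ (Yn n ω) - g₀ (Y ω)‖₊ : ℝ≥0∞) ∂P := by rw [e1, e2]
      _ ≤ _ := e3
      _ = _ := e4
      _ ≤ η / 8 + (∫⁻ ω, (‖f (Yn n ω) - f (Y ω)‖₊ : ℝ≥0∞) ∂P) + η / 8 :=
          add_le_add (add_le_add e5 le_rfl) e6
  -- assemble
  have hSDm : MeasurableSet (S ∆ (res ⁻¹' B)) := hS.symmDiff hAm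
  have t1 : procLaw P X ((shiftMap (δ n) ⁻¹' S) ∆ (shiftMap (δ n) ⁻¹' (res ⁻¹' B)))
      = procLaw P X (S ∆ (res ⁻¹' B)) := by
    rw [← Set.preimage_symmDiff, procLaw_shift_apply P X hmeas hstat _ hSDm]
  have t3 : procLaw P X ((res ⁻¹' B) ∆ S) = procLaw P X (S ∆ (res ⁻¹' B)) := by
    rw [symmDiff_comm]
  have main : procLaw P X ((shiftMap (δ n) ⁻¹' S) ∆ S)
      ≤ η / 8 + ((η / 8 + (η / 8) + η / 8) + η / 8) := by
    calc procLaw P X ((shiftMap (δ n) ⁻¹' S) ∆ S)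
        ≤ procLaw P X ((shiftMap (δ n) ⁻¹' S) ∆ (shiftMap (δ n) ⁻¹' (res ⁻¹' B)))
          + (procLaw P X ((shiftMap (δ n) ⁻¹' (res ⁻¹' B)) ∆ (res ⁻¹' B))
            + procLaw P X ((res ⁻¹' B) ∆ S)) := by
          refine le_trans (measure_symmDiff_le _ (shiftMap (δ n) ⁻¹' (res ⁻¹' B)) _) ?_
          exact add_le_add le_rfl (measure_symmDiff_le _ (res ⁻¹' B) _)
      _ ≤ η / 8 + ((η / 8 + (η / 8) + η / 8) + η / 8) := by
          rw [t1, t3]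
          exact add_le_add hSD.le (add_le_add (hmid.trans
            (add_le_add (add_le_add le_rfl hn.le) le_rfl)) hSD.le)
  refine main.trans (le_trans ?_ hηε)
  set a : ℝ≥0∞ := η / 8 with hadef
  have h5a : a + ((a + a + a) + a) = 5 * a := by ring
  rw [h5a]
  have h8a : (8 : ℝ≥0∞) * a = η := by
    rw [hadef, mul_comm]
    exact ENNReal.div_mul_cancel (by norm_num) (by norm_num)
  calc (5 : ℝ≥0∞) * a ≤ 8 * a := by gcongr <;> norm_num
    _ = η := h8a
end KeyContinuity

/-- a stochastically continuous stationary process over a Polish group `Γ`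
is `Γ`-ergodic iff its restriction to a dense subgroup `G` is `G`-ergodic. -/
theorem ergodic_iff_denseSubgroup_ergodic
    {Γ : Type*} [Group Γ] [TopologicalSpace Γ] [IsTopologicalGroup Γ] [PolishSpace Γ]
    (G : Subgroup Γ) (hG : Dense (G : Set Γ))
    {Ω : Type*} [MeasurableSpace Ω] (P : Measure Ω) [IsProbabilityMeasure P]
    (X : Γ → Ω → ℝ) (hmeas : ∀ γ, Measurable (X γ)) (hstat : Stationary P X)
    (hcont : StochasticallyContinuous P X) :
    ErgodicProcess P X ↔ ErgodicProcess P (fun g : G => X ↑g) := by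
  classical
  have hXm : Measurable (fun ω (γ : Γ) => X γ ω) := measurable_pi_lambda _ hmeas
  set res : (Γ → ℝ) → (↥G → ℝ) := fun x g => x ↑g with hresdef
  have hresm : Measurable res := measurable_pi_lambda _ fun _ => measurable_pi_apply _
  have hν : procLaw P (fun g : G => X ↑g) = (procLaw P X).map res := by
    rw [procLaw, procLaw, Measure.map_map hresm hXm]
    rfl
  have hcomm : ∀ g : ↥G, res ∘ shiftMap (↑g : Γ) = shiftMap g ∘ res := by
    intro g
    funext x h
    have hcoe : (((g⁻¹ * h : ↥G)) : Γ) = ((g : Γ))⁻¹ * (h : Γ) := by push_cast; rfl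
    simp only [Function.comp_apply, shiftMap, hresdef, hcoe]
  have hcommSet : ∀ (g : ↥G) (F : Set (↥G → ℝ)),
      shiftMap (↑g : Γ) ⁻¹' (res ⁻¹' F) = res ⁻¹' (shiftMap g ⁻¹' F) := by
    intro g F
    rw [← Set.preimage_comp, hcomm g, Set.preimage_comp]
  constructor
  · -- Γ-ergodic → G-ergodic
    intro hErg F hF hinv
    set E : Set (Γ → ℝ) := res ⁻¹' F with hEdef
    have hEm : MeasurableSet E := hresm hF
    have hinvG : ∀ g : ↥G, procLaw P X ((shiftMap (↑g : Γ) ⁻¹' E) ∆ E) = 0 := by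
      intro g
      have h1 : (shiftMap (↑g : Γ) ⁻¹' E) ∆ E = res ⁻¹' ((shiftMap g ⁻¹' F) ∆ F) := by
        rw [Set.preimage_symmDiff, hEdef, hcommSet g]
      rw [h1, ← Measure.map_apply hresm (((measurable_shiftMap_s6 g) hF).symmDiff hF), ← hν]
      exact hinv g
    have hinvΓ : ∀ γ : Γ, procLaw P X ((shiftMap γ ⁻¹' E) ∆ E) = 0 := by
      intro γ
      letI := TopologicalSpace.upgradeIsCompletelyMetrizable Γ
      obtain ⟨u, hum, hut⟩ := mem_closure_iff_seq_limit.1 (hG γ)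
      have hδ : Tendsto (fun n => γ * (u n)⁻¹) atTop (𝓝 1) := by
        have hconst : Tendsto (fun _ : ℕ => γ) atTop (𝓝 γ) := tendsto_const_nhds
        have := hconst.mul hut.inv
        simpa using this
      have hC := tendsto_measure_shift_symmDiff P X hmeas hstat hcont hEm hδ
      have hb : ∀ n, procLaw P X ((shiftMap γ ⁻¹' E) ∆ E)
          ≤ procLaw P X ((shiftMap (γ * (u n)⁻¹) ⁻¹' E) ∆ E) := by
        intro n
        have h2 : procLaw P X ((shiftMap (u n) ⁻¹' E) ∆ E) = 0 := hinvG ⟨u n, hum n⟩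
        have h3 : shiftMap (u n) ⁻¹' (shiftMap (γ * (u n)⁻¹) ⁻¹' E) = shiftMap γ ⁻¹' E := by
          rw [← Set.preimage_comp]
          have hco : (shiftMap (γ * (u n)⁻¹)) ∘ (shiftMap (u n))
              = (shiftMap γ : (Γ → ℝ) → Γ → ℝ) := by
            funext x
            rw [Function.comp_apply, shiftMap_comp_apply, inv_mul_cancel_right]
          rw [hco]
        have h4 : procLaw P X ((shiftMap γ ⁻¹' E) ∆ (shiftMap (u n) ⁻¹' E))
            = procLaw P X ((shiftMap (γ * (u n)⁻¹) ⁻¹' E) ∆ E) := by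
          rw [← h3, ← Set.preimage_symmDiff,
            procLaw_shift_apply P X hmeas hstat _
              (((measurable_shiftMap_s6 _) hEm).symmDiff hEm)]
        calc procLaw P X ((shiftMap γ ⁻¹' E) ∆ E)
            ≤ procLaw P X ((shiftMap γ ⁻¹' E) ∆ (shiftMap (u n) ⁻¹' E))
              + procLaw P X ((shiftMap (u n) ⁻¹' E) ∆ E) :=
              measure_symmDiff_le _ _ _
          _ = procLaw P X ((shiftMap (γ * (u n)⁻¹) ⁻¹' E) ∆ E) := by rw [h2, h4, add_zero]
      have hle0 : procLaw P X ((shiftMap γ ⁻¹' E) ∆ E) ≤ 0 := ge_of_tendsto' hC hb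
      exact le_antisymm hle0 zero_le
    have := hErg E hEm hinvΓ
    have hFE : procLaw P (fun g : G => X ↑g) F = procLaw P X E := by
      rw [hν, Measure.map_apply hresm hF]
    rw [hFE]
    exact this
  · -- G-ergodic → Γ-ergodic
    intro hErgG E hE hinv
    obtain ⟨F, hFm, h0⟩ := exists_restr_set G hG P X hmeas hcont hE
    set E' : Set (Γ → ℝ) := res ⁻¹' F with hE'def
    have hE'm : MeasurableSet E' := hresm hFm
    have h0' : procLaw P X (E ∆ E') = 0 := h0
    have hinvG : ∀ g : ↥G,
        procLaw P (fun g : G => X ↑g) ((shiftMap g ⁻¹' F) ∆ F) = 0 := by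
      intro g
      have hm1 : MeasurableSet ((shiftMap g ⁻¹' F) ∆ F) :=
        ((measurable_shiftMap_s6 g) hFm).symmDiff hFm
      rw [hν, Measure.map_apply hresm hm1]
      have h1 : res ⁻¹' ((shiftMap g ⁻¹' F) ∆ F) = (shiftMap (↑g : Γ) ⁻¹' E') ∆ E' := by
        rw [Set.preimage_symmDiff, hcommSet g]
      rw [h1]
      have hb : procLaw P X ((shiftMap (↑g : Γ) ⁻¹' E') ∆ E')
          ≤ procLaw P X ((shiftMap (↑g : Γ) ⁻¹' E') ∆ (shiftMap (↑g : Γ) ⁻¹' E))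
            + (procLaw P X ((shiftMap (↑g : Γ) ⁻¹' E) ∆ E) + procLaw P X (E ∆ E')) := by
        refine le_trans (measure_symmDiff_le _ (shiftMap (↑g : Γ) ⁻¹' E) _) ?_
        exact add_le_add le_rfl (measure_symmDiff_le _ E _)
      have hz1 : procLaw P X ((shiftMap (↑g : Γ) ⁻¹' E') ∆ (shiftMap (↑g : Γ) ⁻¹' E)) = 0 := by
        rw [← Set.preimage_symmDiff,
          procLaw_shift_apply P X hmeas hstat _ (hE'm.symmDiff hE), symmDiff_comm]
        exact h0'
      rw [hz1, hinv (↑g : Γ), h0', zero_add, add_zero] at hb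
      exact le_antisymm hb zero_le
    have hres01 := hErgG F hFm hinvG
    have hEE' : procLaw P X E = procLaw P (fun g : G => X ↑g) F := by
      rw [hν, Measure.map_apply hresm hFm]
      exact measure_congr (measure_symmDiff_eq_zero_iff.1 h0')
    rw [hEE']
    exact hres01

end Paper
end
end

section
/- Let G be a Polish group, (Ω,ℱ,ℙ) a standard probability space, and T : G × Ω → Ω a probability preserving action of G on (Ω,ℱ,ℙ), i.e. a jointly measurable map (g,ω) ↦ T_g(ω) with T_{e_G} = Id ℙ-a.s., T_g∘T_h = T_{gh} ℙ-a.s. for all g,h∈G, and each T_g measure preserving. Then for every A∈ℱ the function G → [0,1], g ↦ ℙ(T_g⁻¹(A) △ A), is continuous. -/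
open MeasureTheory ProbabilityTheory Filter Topology symmDiff

noncomputable section

namespace Paper

variable {G : Type*} {Ω : Type*}

/-- for a probability preserving action of a Polish group (with its Borel
σ-algebra) on a standard probability space, `g ↦ ℙ(T_g⁻¹(A) ∆ A)` is continuous for
every measurable `A`. -/
theorem continuous_measure_symmDiff_of_action
    {G : Type*} [Group G] [TopologicalSpace G] [IsTopologicalGroup G] [PolishSpace G]
    [MeasurableSpace G] [BorelSpace G]
    {Ω : Type*} [MeasurableSpace Ω] [StandardBorelSpace Ω]
    (P : Measure Ω) [IsProbabilityMeasure P] (T : G → Ω → Ω)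
    (hT : Measurable fun p : G × Ω => T p.1 p.2)
    (hid : ∀ᵐ ω ∂P, T 1 ω = ω)
    (hcomp : ∀ g h : G, ∀ᵐ ω ∂P, T g (T h ω) = T (g * h) ω)
    (hmp : ∀ g, ∀ A : Set Ω, MeasurableSet A → P (T g ⁻¹' A) = P A) :
    ∀ A : Set Ω, MeasurableSet A →
      Continuous fun g : G => P ((T g ⁻¹' A) ∆ A) := by
  intro A hA
  have hTg : ∀ g : G, Measurable (T g) := fun g => hT.comp measurable_prodMk_left
  set φ : G → ENNReal := fun g => P ((T g ⁻¹' A) ∆ A) with hφdef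
  have key : ∀ g k : G, P ((T (g * k) ⁻¹' A) ∆ (T k ⁻¹' A)) = φ g := by
    intro g k
    have h1 : ((T (g * k) ⁻¹' A) ∆ (T k ⁻¹' A) : Set Ω)
        =ᵐ[P] T k ⁻¹' ((T g ⁻¹' A) ∆ A) := by
      filter_upwards [hcomp g k] with ω hω
      show (ω ∈ (T (g * k) ⁻¹' A) ∆ (T k ⁻¹' A)) = (ω ∈ T k ⁻¹' ((T g ⁻¹' A) ∆ A))
      simp only [eq_iff_iff, Set.mem_symmDiff, Set.mem_preimage, ← hω]
    rw [measure_congr h1, hmp k _ (((hTg g) hA).symmDiff hA)]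
  have dval : ∀ x y : G, P ((T x ⁻¹' A) ∆ (T y ⁻¹' A)) = φ (x * y⁻¹) := by
    intro x y
    have h := key (x * y⁻¹) y
    rwa [inv_mul_cancel_right] at h
  have meagre_congr : ∀ {s t : Set G}, (s =ᵇ t) → IsMeagre s → IsMeagre t := by
    intro s t hst hs
    have hsub : sᶜ ∩ {x | s x = t x} ⊆ tᶜ := by
      rintro x ⟨hxs, hxe⟩
      simp only [Set.mem_setOf_eq] at hxe
      have hiff : x ∈ s ↔ x ∈ t := iff_of_eq hxe
      exact fun hxt => hxs (hiff.mpr hxt)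
    exact Filter.mem_of_superset (Filter.inter_mem hs hst) hsub
  -- main step: continuity at the identity
  have H1 : Tendsto φ (𝓝 1) (𝓝 0) := by
    rw [ENNReal.tendsto_nhds_zero]
    intro ε hε
    set ε' : ENNReal := min (ε / 2) 1 with hε'def
    have hε'pos : 0 < ε' := lt_min (ENNReal.half_pos hε.ne') one_pos
    have hε'top : ε' ≠ ⊤ := ne_top_of_le_ne_top ENNReal.one_ne_top (min_le_right _ _)
    set r : ℝ := ε'.toReal with hrdef
    have hr0 : 0 < r := ENNReal.toReal_pos hε'pos.ne' hε'top
    have hofr : ENNReal.ofReal r = ε' := ENNReal.ofReal_toReal hε'top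
    obtain ⟨𝒜, h𝒜c, h𝒜⟩ := MeasureTheory.exists_countable_measureDense (μ := P)
    set B : Set Ω → Set G := fun Q => {g | P ((T g ⁻¹' A) ∆ Q) < ENNReal.ofReal r}
      with hBdef
    have hcover : ∀ g : G, ∃ Q ∈ 𝒜, g ∈ B Q := fun g =>
      h𝒜.approx (T g ⁻¹' A) ((hTg g) hA) (measure_ne_top P _) r hr0
    have hBmeas : ∀ Q ∈ 𝒜, MeasurableSet (B Q) := by
      intro Q hQ
      have hQm : MeasurableSet Q := h𝒜.measurable Q hQ
      have hS : MeasurableSet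
          (((fun p : G × Ω => T p.1 p.2) ⁻¹' A) ∆ (Prod.snd ⁻¹' Q)) :=
        (hT hA).symmDiff (measurable_snd hQm)
      have hmeas := measurable_measure_prodMk_left (ν := P) hS
      have heq : (fun g : G => P (Prod.mk g ⁻¹'
          (((fun p : G × Ω => T p.1 p.2) ⁻¹' A) ∆ (Prod.snd ⁻¹' Q))))
          = fun g => P ((T g ⁻¹' A) ∆ Q) := by
        funext g
        have hset : Prod.mk g ⁻¹'
            (((fun p : G × Ω => T p.1 p.2) ⁻¹' A) ∆ (Prod.snd ⁻¹' Q))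
            = (T g ⁻¹' A) ∆ Q := by
          ext ω
          simp [Set.mem_symmDiff]
        rw [hset]
      rw [heq] at hmeas
      exact hmeas measurableSet_Iio
    haveI : BaireSpace G := by
      letI := TopologicalSpace.upgradeIsCompletelyMetrizable G
      infer_instance
    have hexists : ∃ Q ∈ 𝒜, ¬ IsMeagre (B Q) := by
      by_contra hcon
      push_neg at hcon
      have hmem : (⋂ Q ∈ 𝒜, (B Q)ᶜ) ∈ residual G :=
        (countable_bInter_mem h𝒜c).2 fun Q hQ => hcon Q hQ
      have hempty : (⋂ Q ∈ 𝒜, (B Q)ᶜ) = ∅ := by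
        ext g
        simp only [Set.mem_iInter, Set.mem_compl_iff, Set.mem_empty_iff_false,
          iff_false, not_forall]
        obtain ⟨Q, hQ, hg⟩ := hcover g
        exact ⟨Q, hQ, not_not_intro hg⟩
      rw [hempty] at hmem
      have hdense := dense_of_mem_residual hmem
      exact Set.not_nonempty_empty hdense.nonempty
    obtain ⟨Q₀, hQ₀, hBnm⟩ := hexists
    obtain ⟨U, hUopen, hBU⟩ := ((hBmeas Q₀ hQ₀).baireMeasurableSet).residualEq_isOpen
    have hUne : U.Nonempty := by
      rcases U.eq_empty_or_nonempty with h | h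
      · exfalso
        rw [h] at hBU
        exact hBnm (meagre_congr hBU.symm IsMeagre.empty)
      · exact h
    obtain ⟨u, hu⟩ := hUne
    set W : Set G := (fun g => g * u) ⁻¹' U with hWdef
    have hWopen : IsOpen W := hUopen.preimage (continuous_mul_right u)
    have hWmem : W ∈ 𝓝 (1 : G) := hWopen.mem_nhds (by
      simp only [hWdef, Set.mem_preimage, one_mul]
      exact hu)
    have hWbound : ∀ g ∈ W, φ g ≤ ε := by
      intro g hg
      have hcont : Continuous fun x : G => g * x := continuous_mul_left g
      have hopenmap : IsOpenMap fun x : G => g * x := (Homeomorph.mulLeft g).isOpenMap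
      have hCU : ((fun x : G => g * x) ⁻¹' (B Q₀)) =ᵇ ((fun x : G => g * x) ⁻¹' U) :=
        hBU.comp_tendsto (tendsto_residual_of_isOpenMap hcont hopenmap)
      have hint : ((((fun x : G => g * x) ⁻¹' (B Q₀)) ∩ B Q₀ : Set G))
          =ᵇ ((((fun x : G => g * x) ⁻¹' U) ∩ U : Set G)) := hCU.inter hBU
      have hUU : (((fun x : G => g * x) ⁻¹' U) ∩ U).Nonempty := ⟨u, hg, hu⟩
      have hUUopen : IsOpen (((fun x : G => g * x) ⁻¹' U) ∩ U) :=
        (hUopen.preimage hcont).inter hUopen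
      have hnm : ¬ IsMeagre (((fun x : G => g * x) ⁻¹' (B Q₀)) ∩ B Q₀) := by
        intro hmg
        have hm2 := meagre_congr hint hmg
        have hdense := dense_of_mem_residual hm2
        obtain ⟨y, hy1, hy2⟩ := hdense.exists_mem_open hUUopen hUU
        exact hy1 hy2
      have hne : (((fun x : G => g * x) ⁻¹' (B Q₀)) ∩ B Q₀).Nonempty := by
        rcases Set.eq_empty_or_nonempty (((fun x : G => g * x) ⁻¹' (B Q₀)) ∩ B Q₀)
          with h | h
        · exact absurd (by rw [h]; exact IsMeagre.empty) hnm
        · exact h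
      obtain ⟨a, hga, haB⟩ := hne
      have hb : P ((T (g * a) ⁻¹' A) ∆ Q₀) < ENNReal.ofReal r := hga
      have ha : P ((T a ⁻¹' A) ∆ Q₀) < ENNReal.ofReal r := haB
      have hstep : φ g = P ((T (g * a) ⁻¹' A) ∆ (T a ⁻¹' A)) := by
        have h := dval (g * a) a
        rw [mul_inv_cancel_right] at h
        exact h.symm
      calc φ g = P ((T (g * a) ⁻¹' A) ∆ (T a ⁻¹' A)) := hstep
        _ ≤ P ((T (g * a) ⁻¹' A) ∆ Q₀) + P (Q₀ ∆ (T a ⁻¹' A)) :=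
            measure_symmDiff_le _ _ _
        _ ≤ ENNReal.ofReal r + ENNReal.ofReal r := by
            refine add_le_add hb.le ?_
            rw [symmDiff_comm]
            exact ha.le
        _ = ε' + ε' := by rw [hofr]
        _ ≤ ε / 2 + ε / 2 := add_le_add (min_le_left _ _) (min_le_left _ _)
        _ = ε := ENNReal.add_halves ε
    exact Filter.eventually_of_mem hWmem hWbound
  rw [continuous_iff_continuousAt]
  intro g₀
  have h2 : Tendsto (fun g => φ (g * g₀⁻¹)) (𝓝 g₀) (𝓝 0) := by
    apply H1.comp
    have h := (continuous_mul_right (g₀⁻¹ : G)).tendsto g₀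
    simpa using h
  have h3 : Tendsto (fun g => φ (g₀ * g⁻¹)) (𝓝 g₀) (𝓝 0) := by
    apply H1.comp
    have h := ((continuous_mul_left g₀).comp continuous_inv).tendsto g₀
    simpa [Function.comp_def] using h
  have hCA : ContinuousAt φ g₀ := by
    unfold ContinuousAt
    rw [ENNReal.tendsto_nhds (measure_ne_top P _)]
    intro ε hε
    have e2 := (ENNReal.tendsto_nhds_zero.1 h2) ε hε
    have e3 := (ENNReal.tendsto_nhds_zero.1 h3) ε hε
    filter_upwards [e2, e3] with g hg2 hg3
    have hub : φ g ≤ φ (g * g₀⁻¹) + φ g₀ := by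
      calc φ g = P ((T g ⁻¹' A) ∆ A) := rfl
        _ ≤ P ((T g ⁻¹' A) ∆ (T g₀ ⁻¹' A)) + P ((T g₀ ⁻¹' A) ∆ A) :=
            measure_symmDiff_le _ _ _
        _ = φ (g * g₀⁻¹) + φ g₀ := by rw [dval]
    have hlb : φ g₀ ≤ φ (g₀ * g⁻¹) + φ g := by
      calc φ g₀ = P ((T g₀ ⁻¹' A) ∆ A) := rfl
        _ ≤ P ((T g₀ ⁻¹' A) ∆ (T g ⁻¹' A)) + P ((T g ⁻¹' A) ∆ A) :=
            measure_symmDiff_le _ _ _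
        _ = φ (g₀ * g⁻¹) + φ g := by rw [dval]
    constructor
    · refine tsub_le_iff_left.2 ?_
      exact hlb.trans (add_le_add_left hg3 _)
    · exact hub.trans (add_le_add_left hg2 _) |>.trans (by rw [add_comm])
  exact hCA

end Paper
end
end
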